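/- arXiv:1708.08095 — 6 statements merged into one kernel-verified Lean document; each statement's English description precedes it below -/
import Mathlib

section
/- Let n be a positive integer, N = 2n, and let ε = (ε_1, ..., ε_N) be uniformly distributed on Ω = {ε ∈ {−1,1}^N : Σ_{i=1}^N ε_i = 0}, with expectation denoted E_S. Then for every a = (a_1, ..., a_N) ∈ ℝ^N, every real p ≥ 2, and b = (1/N) Σ_{i=1}^N a_i, one has (E_S |Σ_{i=1}^N a_i ε_i|^p)^{1/p} ≤ √(2p) · (Σ_{i=1}^N a_i² − N b²)^{1/2}. -/
/-- The set `Ω = {ε ∈ {-1,1}^N : ∑ ε_i = 0}`. -/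
def Omega (N : ℕ) : Finset (Fin N → ℤ) :=
  (Fintype.piFinset fun _ : Fin N => ({-1, 1} : Finset ℤ)).filter fun ε => ∑ i, ε i = 0

/-- Expectation with respect to the uniform distribution on `Ω`. -/
noncomputable def ES (N : ℕ) (g : (Fin N → ℤ) → ℝ) : ℝ :=
  (∑ ε ∈ Omega N, g ε) / ((Omega N).card : ℝ)

open Finset

/-- product of odd numbers: (2m-1)!! -/
def df (m : ℕ) : ℕ := ∏ j ∈ Finset.range m, (2*j+1)

lemma df_succ (m : ℕ) : df (m+1) = df m * (2*m+1) := Finset.prod_range_succ _ m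

lemma df_pos (m : ℕ) : 0 < df m := Finset.prod_pos (by omega)

lemma df_fact (k : ℕ) : (2*k).factorial = 2^k * k.factorial * df k := by
  induction k with
  | zero => simp [df]
  | succ k ih =>
    have h2 : 2*(k+1) = (2*k+1)+1 := by ring
    rw [h2, Nat.factorial_succ, Nat.factorial_succ, df_succ, Nat.factorial_succ, ih]
    ring

lemma df_identity (m j : ℕ) (h : j ≤ m) :
    Nat.choose (2*m) (2*j) * df j * df (m-j) = df m * Nat.choose m j := by
  have key : (Nat.choose (2*m) (2*j) * df j * df (m-j)) * (2^m * (j.factorial * (m-j).factorial))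
      = (df m * Nat.choose m j) * (2^m * (j.factorial * (m-j).factorial)) := by
    have h1 : 2^m = 2^j * 2^(m-j) := by rw [← pow_add]; congr 1; omega
    have h2 : 2*m - 2*j = 2*(m-j) := by omega
    have c1 := Nat.choose_mul_factorial_mul_factorial (by omega : 2*j ≤ 2*m)
    have c2 := Nat.choose_mul_factorial_mul_factorial h
    calc Nat.choose (2*m) (2*j) * df j * df (m-j) * (2^m * (j.factorial * (m-j).factorial))
        = Nat.choose (2*m) (2*j) * (2^j * j.factorial * df j) * (2^(m-j) * (m-j).factorial * df (m-j)) := by rw [h1]; ring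
      _ = Nat.choose (2*m) (2*j) * (2*j).factorial * (2*(m-j)).factorial := by rw [← df_fact, ← df_fact]
      _ = Nat.choose (2*m) (2*j) * (2*j).factorial * (2*m - 2*j).factorial := by rw [h2]
      _ = (2*m).factorial := c1
      _ = 2^m * m.factorial * df m := df_fact m
      _ = 2^m * (Nat.choose m j * j.factorial * (m-j).factorial) * df m := by rw [c2]
      _ = df m * Nat.choose m j * (2^m * (j.factorial * (m-j).factorial)) := by ring
  exact Nat.eq_of_mul_eq_mul_right (by positivity) key

lemma df_le (m : ℕ) : df m ≤ m^m := by
  have sq : df m * df m ≤ (m^m) * (m^m) := by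
    have : df m * df m = ∏ j ∈ Finset.range m, ((2*j+1) * (2*(m-1-j)+1)) := by
      rw [Finset.prod_mul_distrib]
      congr 1
      exact (Finset.prod_range_reflect (fun j => 2*j+1) m).symm
    rw [this, ← pow_add, ← two_mul, pow_mul]
    calc ∏ j ∈ Finset.range m, ((2*j+1) * (2*(m-1-j)+1)) ≤ ∏ _j ∈ Finset.range m, m^2 := by
          apply Finset.prod_le_prod'
          intro j hj
          simp only [Finset.mem_range] at hj
          obtain ⟨u, rfl⟩ : ∃ u, m = j + u + 1 := ⟨m-1-j, by omega⟩
          have h2 : j + u + 1 - 1 - j = u := by omega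
          rw [h2]
          nlinarith [two_mul_le_add_sq j u]
      _ = (m^2)^m := by rw [Finset.prod_const, Finset.card_range]
  exact le_of_not_gt fun h => absurd sq (not_le.mpr (Nat.mul_self_lt_mul_self h))

def sgn (b : Bool) : ℝ := if b then 1 else -1

lemma even_filter_eq (m : ℕ) :
    (Finset.range (2*m+1)).filter (fun k => Even k) = (Finset.range (m+1)).image (fun j => 2*j) := by
  ext k
  simp only [Finset.mem_filter, Finset.mem_range, Finset.mem_image]
  constructor
  · rintro ⟨hk, j, hj⟩; exact ⟨j, by omega, by omega⟩
  · rintro ⟨j, hj, rfl⟩; exact ⟨by omega, j, by omega⟩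

lemma even_pow_expand (x S : ℝ) (m : ℕ) :
    (x + S)^(2*m) + (-x + S)^(2*m)
      = ∑ j ∈ Finset.range (m+1), 2 * (Nat.choose (2*m) (2*j) : ℝ) * x^(2*j) * S^(2*(m-j)) := by
  rw [add_pow, add_pow]
  rw [← Finset.sum_add_distrib]
  have key : ∀ k ∈ Finset.range (2*m+1),
      x^k * S^(2*m-k) * (Nat.choose (2*m) k : ℝ) + (-x)^k * S^(2*m-k) * (Nat.choose (2*m) k : ℝ)
      = if Even k then 2 * (Nat.choose (2*m) k : ℝ) * x^k * S^(2*m-k) else 0 := by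
    intro k _
    rcases Nat.even_or_odd k with he | ho
    · rw [if_pos he, he.neg_pow]; ring
    · rw [if_neg (Nat.not_even_iff_odd.mpr ho), ho.neg_pow]; ring
  rw [Finset.sum_congr rfl key, Finset.sum_ite, Finset.sum_const_zero, add_zero,
    even_filter_eq, Finset.sum_image (by intro a _ b _ h; have h' : 2*a = 2*b := h; omega)]
  apply Finset.sum_congr rfl
  intro j hj
  simp only [Finset.mem_range] at hj
  have : 2*m - 2*j = 2*(m-j) := by omega
  rw [this]

lemma rad : ∀ (k : ℕ) (m : ℕ) (d : Fin k → ℝ),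
    ∑ ρ : Fin k → Bool, (∑ j, d j * sgn (ρ j))^(2*m)
      ≤ 2^k * (df m : ℝ) * (∑ j, d j^2)^m := by
  intro k
  induction k with
  | zero =>
    intro m d
    rcases Nat.eq_zero_or_pos m with rfl | hm
    · simp [df]
    · have h1 : (2*m) ≠ 0 := by omega
      simp [zero_pow h1, zero_pow (by omega : m ≠ 0)]
  | succ k ih =>
    intro m d
    have t_nonneg : (0:ℝ) ≤ ∑ j : Fin k, (d j.succ)^2 := by positivity
    set t : ℝ := ∑ j : Fin k, (d j.succ)^2 with ht
    calc ∑ ρ : Fin (k+1) → Bool, (∑ j, d j * sgn (ρ j))^(2*m)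
        = ∑ x : Bool × (Fin k → Bool), (∑ j, d j * sgn ((Fin.consEquiv (fun _ : Fin (k+1) => Bool)) x j))^(2*m) := by
          exact (Fintype.sum_equiv (Fin.consEquiv (fun _ : Fin (k+1) => Bool)) _ _ (fun x => rfl)).symm
      _ = ∑ ρ : Fin k → Bool, ∑ b : Bool, (d 0 * sgn b + ∑ j : Fin k, d j.succ * sgn (ρ j))^(2*m) := by
          rw [Fintype.sum_prod_type, Finset.sum_comm]
          apply Finset.sum_congr rfl; intro ρ _
          apply Finset.sum_congr rfl; intro b _
          congr 1
          rw [Fin.sum_univ_succ]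
          simp [Fin.consEquiv]
      _ = ∑ ρ : Fin k → Bool, ∑ j ∈ Finset.range (m+1),
            2 * (Nat.choose (2*m) (2*j) : ℝ) * (d 0)^(2*j) * (∑ i : Fin k, d i.succ * sgn (ρ i))^(2*(m-j)) := by
          apply Finset.sum_congr rfl; intro ρ _
          rw [Fintype.sum_bool]
          have h1 : d 0 * sgn true = d 0 := by simp [sgn]
          have h2 : d 0 * sgn false = -(d 0) := by simp [sgn]
          rw [h1, h2]
          exact even_pow_expand (d 0) _ m
      _ = ∑ j ∈ Finset.range (m+1), 2 * (Nat.choose (2*m) (2*j) : ℝ) * (d 0)^(2*j) *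
            (∑ ρ : Fin k → Bool, (∑ i : Fin k, d i.succ * sgn (ρ i))^(2*(m-j))) := by
          rw [Finset.sum_comm]
          apply Finset.sum_congr rfl; intro j _
          rw [Finset.mul_sum]
      _ ≤ ∑ j ∈ Finset.range (m+1), 2 * (Nat.choose (2*m) (2*j) : ℝ) * (d 0)^(2*j) *
            (2^k * (df (m-j) : ℝ) * t^(m-j)) := by
          apply Finset.sum_le_sum; intro j _
          apply mul_le_mul_of_nonneg_left (ih (m-j) (fun i => d i.succ))
          have hpow : (d 0)^(2*j) = ((d 0)^2)^j := by rw [← pow_mul]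
          rw [hpow]; positivity
      _ ≤ ∑ j ∈ Finset.range (m+1), 2 * 2^k * (df m : ℝ) * ((Nat.choose m j : ℝ) * ((d 0)^2)^j * t^(m-j)) := by
          apply Finset.sum_le_sum; intro j hj
          simp only [Finset.mem_range] at hj
          have hid : (Nat.choose (2*m) (2*j) : ℝ) * (df (m-j) : ℝ) ≤ (df m : ℝ) * (Nat.choose m j : ℝ) := by
            have h1 : Nat.choose (2*m) (2*j) * df (m-j) ≤ df m * Nat.choose m j := by
              calc Nat.choose (2*m) (2*j) * df (m-j)
                  ≤ Nat.choose (2*m) (2*j) * df j * df (m-j) := by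
                    exact Nat.mul_le_mul_right _ (Nat.le_mul_of_pos_right _ (df_pos j))
                _ = df m * Nat.choose m j := df_identity m j (by omega)
            exact_mod_cast h1
          have hpow : (d 0)^(2*j) = ((d 0)^2)^j := by rw [← pow_mul]
          have hd : (0:ℝ) ≤ ((d 0)^2)^j := by positivity
          calc 2 * (Nat.choose (2*m) (2*j) : ℝ) * (d 0)^(2*j) * (2^k * (df (m-j) : ℝ) * t^(m-j))
              = (2 * 2^k) * ((Nat.choose (2*m) (2*j) : ℝ) * (df (m-j) : ℝ)) * (((d 0)^2)^j * t^(m-j)) := by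
                rw [hpow]; ring
            _ ≤ (2 * 2^k) * ((df m : ℝ) * (Nat.choose m j : ℝ)) * (((d 0)^2)^j * t^(m-j)) := by
                exact mul_le_mul_of_nonneg_right (mul_le_mul_of_nonneg_left hid (by positivity))
                  (mul_nonneg hd (pow_nonneg t_nonneg _))
            _ = 2 * 2^k * (df m : ℝ) * ((Nat.choose m j : ℝ) * ((d 0)^2)^j * t^(m-j)) := by ring
      _ = 2^(k+1) * (df m : ℝ) * ((d 0)^2 + t)^m := by
          rw [← Finset.mul_sum, add_pow]
          have : ∑ j ∈ Finset.range (m+1), ((d 0)^2)^j * t^(m-j) * (Nat.choose m j : ℝ)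
              = ∑ j ∈ Finset.range (m+1), (Nat.choose m j : ℝ) * ((d 0)^2)^j * t^(m-j) := by
            apply Finset.sum_congr rfl; intro j _; ring
          rw [this]; ring
      _ = 2^(k+1) * (df m : ℝ) * (∑ j : Fin (k+1), (d j)^2)^m := by
          rw [Fin.sum_univ_succ]

noncomputable section

def eIdx (n : ℕ) : Fin (2*n) ≃ Fin n ⊕ Fin n := (finCongr (two_mul n)).trans finSumFinEquiv.symm

def base (n : ℕ) (σ : Fin n → Bool) : Fin (2*n) → ℤ :=
  fun i => Sum.elim (fun l => if σ l then 1 else -1) (fun l => if σ l then -1 else 1) (eIdx n i)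

lemma sum_split {M : Type*} [AddCommMonoid M] (n : ℕ) (f : Fin (2*n) → M) :
    ∑ i, f i = (∑ l : Fin n, f ((eIdx n).symm (Sum.inl l))) + ∑ l : Fin n, f ((eIdx n).symm (Sum.inr l)) := by
  rw [← Equiv.sum_comp (eIdx n).symm f, Fintype.sum_sum_type]

lemma base_inl (n : ℕ) (σ : Fin n → Bool) (l : Fin n) :
    base n σ ((eIdx n).symm (Sum.inl l)) = if σ l then 1 else -1 := by
  simp [base]

lemma base_inr (n : ℕ) (σ : Fin n → Bool) (l : Fin n) :
    base n σ ((eIdx n).symm (Sum.inr l)) = if σ l then -1 else 1 := by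
  simp [base]

lemma base_mem (n : ℕ) (σ : Fin n → Bool) (π : Equiv.Perm (Fin (2*n))) :
    (fun i => base n σ (π i)) ∈ Omega (2*n) := by
  rw [Omega, Finset.mem_filter]
  constructor
  · rw [Fintype.mem_piFinset]
    intro i
    simp only [Finset.mem_insert, Finset.mem_singleton]
    rcases h : eIdx n (π i) with l | l <;> simp only [base, h, Sum.elim_inl, Sum.elim_inr] <;>
      rcases (σ l).eq_false_or_eq_true with h2 | h2 <;> simp [h2]
  · rw [Equiv.sum_comp π (base n σ), sum_split n (base n σ)]
    rw [← Finset.sum_add_distrib]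
    apply Finset.sum_eq_zero
    intro l _
    rw [base_inl, base_inr]
    rcases (σ l).eq_false_or_eq_true with h | h <;> rw [h] <;> simp

lemma omega_vals {N : ℕ} {ε : Fin N → ℤ} (hε : ε ∈ Omega N) (i : Fin N) : ε i = 1 ∨ ε i = -1 := by
  rw [Omega, Finset.mem_filter, Fintype.mem_piFinset] at hε
  have := hε.1 i
  simp only [Finset.mem_insert, Finset.mem_singleton] at this
  tauto

lemma omega_plus_card {N : ℕ} {ε : Fin N → ℤ} (hε : ε ∈ Omega N) :
    2 * (Finset.univ.filter (fun i => ε i = 1)).card = N := by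
  have hsum : ∑ i, ε i = 0 := by
    rw [Omega, Finset.mem_filter] at hε; exact hε.2
  have hsplit := Finset.sum_filter_add_sum_filter_not Finset.univ (fun i => ε i = 1) ε
  have h1 : ∑ i ∈ Finset.univ.filter (fun i => ε i = 1), ε i
      = ((Finset.univ.filter (fun i => ε i = 1)).card : ℤ) := by
    rw [Finset.sum_congr rfl (fun i hi => (Finset.mem_filter.mp hi).2)]
    simp
  have h2 : ∑ i ∈ Finset.univ.filter (fun i => ¬ ε i = 1), ε i
      = -((Finset.univ.filter (fun i => ¬ ε i = 1)).card : ℤ) := by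
    have hv : ∀ i ∈ Finset.univ.filter (fun i => ¬ ε i = 1), ε i = -1 := by
      intro i hi
      rcases omega_vals hε i with h | h
      · exact absurd h (Finset.mem_filter.mp hi).2
      · exact h
    rw [Finset.sum_congr rfl hv]
    simp
  have hcard := Finset.card_filter_add_card_filter_not (s := Finset.univ)
    (p := fun i : Fin N => ε i = 1)
  rw [h1, h2, hsum] at hsplit
  simp only [Finset.card_univ, Fintype.card_fin] at hcard
  omega

lemma exists_perm {n : ℕ} {ε : Fin (2*n) → ℤ} (hε : ε ∈ Omega (2*n)) :
    ∃ π : Equiv.Perm (Fin (2*n)), ∀ i, base n (fun _ => true) (π i) = ε i := by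
  classical
  set b : Fin (2*n) → ℤ := base n (fun _ => true) with hb
  have hbmem : b ∈ Omega (2*n) := by
    have := base_mem n (fun _ => true) (Equiv.refl _)
    simpa using this
  have hcard1 : 2 * (Finset.univ.filter (fun i => ε i = 1)).card = 2*n := omega_plus_card hε
  have hcard2 : 2 * (Finset.univ.filter (fun i => b i = 1)).card = 2*n := omega_plus_card hbmem
  have hfe := Finset.card_filter_add_card_filter_not (s := (Finset.univ : Finset (Fin (2*n))))
    (p := fun i => ε i = 1)
  have hfb := Finset.card_filter_add_card_filter_not (s := (Finset.univ : Finset (Fin (2*n))))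
    (p := fun i => b i = 1)
  simp only [Finset.card_univ, Fintype.card_fin] at hfe hfb
  have hc : Fintype.card {i // ε i = 1} = Fintype.card {i // b i = 1} := by
    rw [Fintype.card_subtype, Fintype.card_subtype]; omega
  have hcn : Fintype.card {i // ¬ ε i = 1} = Fintype.card {i // ¬ b i = 1} := by
    rw [Fintype.card_subtype, Fintype.card_subtype]; omega
  let e1 := Fintype.equivOfCardEq hc
  let e2 := Fintype.equivOfCardEq hcn
  refine ⟨(Equiv.sumCompl (fun i => ε i = 1)).symm.trans ((e1.sumCongr e2).trans
    (Equiv.sumCompl (fun i => b i = 1))), fun i => ?_⟩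
  by_cases h : ε i = 1
  · rw [h]
    have hs : (Equiv.sumCompl (fun i => ε i = 1)).symm i = Sum.inl ⟨i, h⟩ :=
      Equiv.sumCompl_symm_apply_of_pos (p := fun i => ε i = 1) (a := i) h
    simp only [Equiv.trans_apply, hs, Equiv.sumCongr_apply, Sum.map_inl, Equiv.sumCompl_apply_inl]
    exact (e1 ⟨i, h⟩).2
  · have h1 : ε i = -1 := (omega_vals hε i).resolve_left h
    rw [h1]
    have hs : (Equiv.sumCompl (fun i => ε i = 1)).symm i = Sum.inr ⟨i, h⟩ :=
      Equiv.sumCompl_symm_apply_of_neg (p := fun i => ε i = 1) (a := i) h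
    simp only [Equiv.trans_apply, hs, Equiv.sumCongr_apply, Sum.map_inr, Equiv.sumCompl_apply_inr]
    exact (omega_vals hbmem _).resolve_left (e2 ⟨i, h⟩).2

def G (n : ℕ) (x : (Fin n → Bool) × Equiv.Perm (Fin (2*n))) : Fin (2*n) → ℤ :=
  fun i => base n x.1 (x.2 i)

lemma G_image (n : ℕ) : (Finset.univ.image (G n)) = Omega (2*n) := by
  apply Finset.Subset.antisymm
  · intro ε hε
    rw [Finset.mem_image] at hε
    obtain ⟨x, _, rfl⟩ := hε
    exact base_mem n x.1 x.2
  · intro ε hε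
    rw [Finset.mem_image]
    obtain ⟨π, hπ⟩ := exists_perm hε
    exact ⟨((fun _ => true), π), Finset.mem_univ _, funext hπ⟩

lemma G_fiber_card (n : ℕ) {ε ε' : Fin (2*n) → ℤ} (hε : ε ∈ Omega (2*n)) (hε' : ε' ∈ Omega (2*n)) :
    (Finset.univ.filter (fun x => G n x = ε)).card
      = (Finset.univ.filter (fun x => G n x = ε')).card := by
  classical
  obtain ⟨α, hα⟩ := exists_perm hε
  obtain ⟨β, hβ⟩ := exists_perm hε'
  have hρ : ∀ i, ε ((β.trans α.symm) i) = ε' i := by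
    intro i
    calc ε (α.symm (β i)) = base n (fun _ => true) (α (α.symm (β i))) := (hα _).symm
      _ = base n (fun _ => true) (β i) := by rw [Equiv.apply_symm_apply]
      _ = ε' i := hβ i
  have hρ' : ∀ i, ε' ((α.trans β.symm) i) = ε i := by
    intro i
    calc ε' (β.symm (α i)) = ε ((β.trans α.symm) (β.symm (α i))) := (hρ _).symm
      _ = ε i := by simp
  refine Finset.card_bij' (fun x _ => (x.1, (β.trans α.symm).trans x.2))
    (fun x _ => (x.1, (α.trans β.symm).trans x.2)) ?hi ?hj ?li ?ri
  case hi =>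
    intro x hx
    simp only [Finset.mem_filter, Finset.mem_univ, true_and] at hx ⊢
    funext i
    have := congrFun hx ((β.trans α.symm) i)
    simp only [G] at this ⊢
    simp only [Equiv.trans_apply] at this ⊢
    rw [this]
    exact hρ i
  case hj =>
    intro x hx
    simp only [Finset.mem_filter, Finset.mem_univ, true_and] at hx ⊢
    funext i
    have := congrFun hx ((α.trans β.symm) i)
    simp only [G] at this ⊢
    simp only [Equiv.trans_apply] at this ⊢
    rw [this]
    exact hρ' i
  case li =>
    intro x hx
    obtain ⟨σ, π⟩ := x
    simp only [Prod.mk.injEq]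
    refine ⟨trivial, ?_⟩
    ext i
    simp
  case ri =>
    intro x hx
    obtain ⟨σ, π⟩ := x
    simp only [Prod.mk.injEq]
    refine ⟨trivial, ?_⟩
    ext i
    simp

lemma sum_G (n : ℕ) :
    ∃ c : ℕ, 0 < c ∧ ∀ g : (Fin (2*n) → ℤ) → ℝ,
      ∑ x : (Fin n → Bool) × Equiv.Perm (Fin (2*n)), g (G n x)
        = c * ∑ ε ∈ Omega (2*n), g ε := by
  classical
  have hb : base n (fun _ => true) ∈ Omega (2*n) := by
    have := base_mem n (fun _ => true) (Equiv.refl _)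
    simpa using this
  refine ⟨(Finset.univ.filter (fun x => G n x = base n (fun _ => true))).card, ?_, ?_⟩
  · apply Finset.card_pos.mpr
    refine ⟨((fun _ => true), Equiv.refl _), ?_⟩
    simp only [Finset.mem_filter, Finset.mem_univ, true_and]
    rfl
  · intro g
    rw [Finset.sum_comp g (G n), G_image n, Finset.mul_sum]
    apply Finset.sum_congr rfl
    intro ε hε
    rw [G_fiber_card n hε hb]
    simp [nsmul_eq_mul]

lemma omega_card_pos (n : ℕ) : 0 < (Omega (2*n)).card := by
  apply Finset.card_pos.mpr
  refine ⟨base n (fun _ => true), ?_⟩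
  have := base_mem n (fun _ => true) (Equiv.refl _)
  simpa using this

lemma ES_eq (n : ℕ) (g : (Fin (2*n) → ℤ) → ℝ) :
    ES (2*n) g = (∑ x : (Fin n → Bool) × Equiv.Perm (Fin (2*n)), g (G n x)) /
      (Fintype.card ((Fin n → Bool) × Equiv.Perm (Fin (2*n))) : ℝ) := by
  obtain ⟨c, hc, hsum⟩ := sum_G n
  have htot : (Fintype.card ((Fin n → Bool) × Equiv.Perm (Fin (2*n))) : ℝ)
      = c * (Omega (2*n)).card := by
    have h1 := hsum (fun _ => (1:ℝ))
    simpa using h1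
  have hK : ((Omega (2*n)).card : ℝ) ≠ 0 := Nat.cast_ne_zero.mpr (omega_card_pos n).ne'
  have hc' : (c:ℝ) ≠ 0 := Nat.cast_ne_zero.mpr hc.ne'
  rw [ES, hsum g, htot]
  field_simp

lemma inner_rewrite (n : ℕ) (c : Fin (2*n) → ℝ) (σ : Fin n → Bool) (π : Equiv.Perm (Fin (2*n))) :
    ∑ i, c i * (base n σ (π i) : ℝ)
      = ∑ l : Fin n, (c (π.symm ((eIdx n).symm (Sum.inl l))) - c (π.symm ((eIdx n).symm (Sum.inr l)))) * sgn (σ l) := by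
  have h1 : ∑ i, c i * (base n σ (π i) : ℝ) = ∑ j, c (π.symm j) * (base n σ j : ℝ) := by
    rw [← Equiv.sum_comp π (fun j => c (π.symm j) * (base n σ j : ℝ))]
    simp
  rw [h1, sum_split n (fun j => c (π.symm j) * (base n σ j : ℝ)), ← Finset.sum_add_distrib]
  apply Finset.sum_congr rfl
  intro l _
  rw [base_inl, base_inr]
  rcases (σ l).eq_false_or_eq_true with h | h <;> rw [h] <;> simp [sgn] <;> ring

lemma d_norm (n : ℕ) (c : Fin (2*n) → ℝ) (π : Equiv.Perm (Fin (2*n))) :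
    ∑ l : Fin n, (c (π.symm ((eIdx n).symm (Sum.inl l))) - c (π.symm ((eIdx n).symm (Sum.inr l))))^2
      ≤ 2 * ∑ i, (c i)^2 := by
  have h2 : ∑ i, (c i)^2 = ∑ j, (c (π.symm j))^2 := (Equiv.sum_comp π.symm (fun i => (c i)^2)).symm
  rw [h2, sum_split n (fun j => (c (π.symm j))^2), mul_add, Finset.mul_sum, Finset.mul_sum,
    ← Finset.sum_add_distrib]
  apply Finset.sum_le_sum
  intro l _
  nlinarith [sq_nonneg (c (π.symm ((eIdx n).symm (Sum.inl l))) + c (π.symm ((eIdx n).symm (Sum.inr l))))]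

lemma ES_moment (n : ℕ) (c : Fin (2*n) → ℝ) (m : ℕ) :
    ES (2*n) (fun ε => (∑ i, c i * (ε i : ℝ))^(2*m))
      ≤ (df m : ℝ) * (2 * ∑ i, (c i)^2)^m := by
  rw [ES_eq]
  have hT : (0:ℝ) < (Fintype.card ((Fin n → Bool) × Equiv.Perm (Fin (2*n))) : ℝ) := by
    exact_mod_cast Fintype.card_pos
  rw [div_le_iff₀ hT]
  have hTnn : (0:ℝ) ≤ ∑ i, (c i)^2 := by positivity
  calc ∑ x : (Fin n → Bool) × Equiv.Perm (Fin (2*n)), (∑ i, c i * (G n x i : ℝ))^(2*m)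
      = ∑ π : Equiv.Perm (Fin (2*n)), ∑ σ : Fin n → Bool,
          (∑ l : Fin n, (c (π.symm ((eIdx n).symm (Sum.inl l))) - c (π.symm ((eIdx n).symm (Sum.inr l)))) * sgn (σ l))^(2*m) := by
        rw [Fintype.sum_prod_type, Finset.sum_comm]
        apply Finset.sum_congr rfl; intro π _
        apply Finset.sum_congr rfl; intro σ _
        show (∑ i, c i * (base n σ (π i) : ℝ))^(2*m) = _
        rw [inner_rewrite n c σ π]
    _ ≤ ∑ π : Equiv.Perm (Fin (2*n)), 2^n * (df m : ℝ) *
          (∑ l : Fin n, (c (π.symm ((eIdx n).symm (Sum.inl l))) - c (π.symm ((eIdx n).symm (Sum.inr l))))^2)^m := by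
        apply Finset.sum_le_sum; intro π _
        exact rad n m _
    _ ≤ ∑ π : Equiv.Perm (Fin (2*n)), 2^n * (df m : ℝ) * (2 * ∑ i, (c i)^2)^m := by
        apply Finset.sum_le_sum; intro π _
        apply mul_le_mul_of_nonneg_left _ (by positivity)
        apply pow_le_pow_left₀ (by positivity) (d_norm n c π)
    _ = (df m : ℝ) * (2 * ∑ i, (c i)^2)^m * (Fintype.card ((Fin n → Bool) × Equiv.Perm (Fin (2*n))) : ℝ) := by
        rw [Finset.sum_const, Finset.card_univ, Fintype.card_prod]
        simp only [nsmul_eq_mul, Nat.cast_mul, Nat.cast_pow, Nat.cast_ofNat]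
        rw [Fintype.card_fun]
        simp only [Fintype.card_bool, Fintype.card_fin]
        push_cast
        ring

lemma ES_nonneg (N : ℕ) (g : (Fin N → ℤ) → ℝ) (hg : ∀ ε, 0 ≤ g ε) : 0 ≤ ES N g :=
  div_nonneg (Finset.sum_nonneg fun ε _ => hg ε) (Nat.cast_nonneg _)

theorem stmt0 (n : ℕ) (hn : 0 < n) (a : Fin (2 * n) → ℝ) (p : ℝ) (hp : 2 ≤ p) :
    (ES (2 * n) fun ε => |∑ i, a i * (ε i : ℝ)| ^ p) ^ (1 / p) ≤
      Real.sqrt (2 * p) *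
        Real.sqrt (∑ i, (a i) ^ 2 - (2 * n : ℝ) * ((∑ i, a i) / (2 * n : ℝ)) ^ 2) := by
  have hp0 : (0:ℝ) < p := by linarith
  have hn0 : (2:ℝ) * n ≠ 0 := by positivity
  set b : ℝ := (∑ i, a i) / (2 * (n:ℝ)) with hb
  set c : Fin (2*n) → ℝ := fun i => a i - b with hc
  set T : ℝ := ∑ i, (c i)^2 with hT
  have hTnn : 0 ≤ T := by positivity
  have hsum_a : ∑ i, a i = 2*(n:ℝ)*b := by
    rw [hb]; field_simp
  have hT_eq : T = ∑ i, (a i)^2 - 2*(n:ℝ)*b^2 := by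
    rw [hT]
    have expand : ∀ i ∈ Finset.univ, (c i)^2 = (a i)^2 - 2*b*(a i) + b^2 := fun i _ => by
      rw [hc]; ring
    rw [Finset.sum_congr rfl expand, Finset.sum_add_distrib, Finset.sum_sub_distrib,
      ← Finset.mul_sum, Finset.sum_const, Finset.card_univ, Fintype.card_fin, hsum_a,
      nsmul_eq_mul]
    push_cast
    ring
  -- centering
  have hES : (ES (2 * n) fun ε => |∑ i, a i * (ε i : ℝ)| ^ p)
      = ES (2 * n) (fun ε => |∑ i, c i * (ε i : ℝ)| ^ p) := by
    unfold ES
    congr 1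
    apply Finset.sum_congr rfl
    intro ε hε
    have h0 : ∑ i, (ε i : ℝ) = 0 := by
      have h1 : ∑ i, ε i = 0 := (Finset.mem_filter.mp hε).2
      have := congrArg (fun z : ℤ => (z : ℝ)) h1
      push_cast at this
      simpa using this
    have heq : ∑ i, c i * (ε i : ℝ) = ∑ i, a i * (ε i : ℝ) := by
      simp only [hc, sub_mul]
      rw [Finset.sum_sub_distrib, ← Finset.mul_sum, h0, mul_zero, sub_zero]
    show |∑ i, a i * (ε i : ℝ)| ^ p = |∑ i, c i * (ε i : ℝ)| ^ p
    rw [heq]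
  rw [hES]
  -- choose m
  set m : ℕ := ⌈p/2⌉₊ with hm
  have hm1 : 1 ≤ m := Nat.one_le_iff_ne_zero.mpr (by
    have : (0:ℝ) < p/2 := by linarith
    exact (Nat.ceil_pos.mpr this).ne')
  have hpm : p ≤ 2*(m:ℝ) := by
    have := Nat.le_ceil (p/2)
    rw [← hm] at this
    linarith
  have hmp : (m:ℝ) ≤ p := by
    have h1 : (⌈p/2⌉₊ : ℝ) < p/2 + 1 := Nat.ceil_lt_add_one (by positivity)
    rw [← hm] at h1
    linarith
  have h2m : (0:ℝ) < 2*(m:ℝ) := by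
    have : (1:ℝ) ≤ m := by exact_mod_cast hm1
    linarith
  set X : (Fin (2*n) → ℤ) → ℝ := fun ε => ∑ i, c i * (ε i : ℝ) with hX
  set K : ℝ := ((Omega (2*n)).card : ℝ) with hK
  have hKpos : 0 < K := by rw [hK]; exact_mod_cast omega_card_pos n
  -- Jensen
  have hESconv : ∀ g : (Fin (2*n) → ℤ) → ℝ, ES (2*n) g = ∑ ε ∈ Omega (2*n), K⁻¹ * g ε := by
    intro g
    rw [ES, div_eq_mul_inv, mul_comm, Finset.mul_sum]
  have hE2nn : 0 ≤ ES (2*n) (fun ε => (X ε)^(2*m)) :=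
    ES_nonneg _ _ (fun ε => (even_two_mul m).pow_nonneg _)
  have hjensen : ES (2*n) (fun ε => |X ε| ^ p) ≤ (ES (2*n) (fun ε => (X ε)^(2*m)))^(p/(2*(m:ℝ))) := by
    have hr : (1:ℝ) ≤ (2*(m:ℝ))/p := (one_le_div hp0).mpr hpm
    have key := Real.arith_mean_le_rpow_mean (Omega (2*n)) (fun _ => K⁻¹) (fun ε => |X ε| ^ p)
      (fun _ _ => inv_nonneg.mpr hKpos.le) ?_ (fun ε _ => Real.rpow_nonneg (abs_nonneg _) p) hr
    · have hzr : ∀ ε : Fin (2*n) → ℤ, ((|X ε| ^ p) ^ ((2*(m:ℝ))/p) : ℝ) = (X ε)^(2*m) := by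
        intro ε
        rw [← Real.rpow_mul (abs_nonneg _)]
        have hpr : p * ((2*(m:ℝ))/p) = ((2*m : ℕ) : ℝ) := by
          push_cast
          field_simp
        rw [hpr, Real.rpow_natCast, (even_two_mul m).pow_abs]
      rw [hESconv (fun ε => |X ε|^p), hESconv (fun ε => (X ε)^(2*m))]
      have h1r : (1:ℝ)/((2*(m:ℝ))/p) = p/(2*(m:ℝ)) := one_div_div _ _
      calc ∑ ε ∈ Omega (2*n), K⁻¹ * |X ε|^p
          ≤ (∑ ε ∈ Omega (2*n), K⁻¹ * (|X ε|^p)^((2*(m:ℝ))/p))^((1:ℝ)/((2*(m:ℝ))/p)) := key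
        _ = (∑ ε ∈ Omega (2*n), K⁻¹ * (X ε)^(2*m))^(p/(2*(m:ℝ))) := by
            rw [h1r]
            congr 1
            apply Finset.sum_congr rfl
            intro ε _
            rw [hzr ε]
    · rw [Finset.sum_const, nsmul_eq_mul, ← hK]
      field_simp
  have hmoment : ES (2*n) (fun ε => (X ε)^(2*m)) ≤ (2*p*T)^m := by
    calc ES (2*n) (fun ε => (X ε)^(2*m)) ≤ (df m : ℝ) * (2*T)^m := ES_moment n c m
      _ ≤ p^m * (2*T)^m := by
          apply mul_le_mul_of_nonneg_right _ (by positivity)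
          calc (df m : ℝ) ≤ ((m^m : ℕ) : ℝ) := by exact_mod_cast df_le m
            _ = (m:ℝ)^m := by push_cast; rfl
            _ ≤ p^m := pow_le_pow_left₀ (by positivity) hmp m
      _ = (2*p*T)^m := by rw [← mul_pow]; ring_nf
  have hE1nn : 0 ≤ ES (2*n) (fun ε => |X ε|^p) :=
    ES_nonneg _ _ (fun ε => Real.rpow_nonneg (abs_nonneg _) _)
  have hmne : (m:ℝ) ≠ 0 := by
    have : (1:ℝ) ≤ m := by exact_mod_cast hm1
    linarith
  calc (ES (2*n) fun ε => |X ε|^p)^((1:ℝ)/p)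
      ≤ ((ES (2*n) (fun ε => (X ε)^(2*m)))^(p/(2*(m:ℝ))))^((1:ℝ)/p) :=
        Real.rpow_le_rpow hE1nn hjensen (by positivity)
    _ = (ES (2*n) (fun ε => (X ε)^(2*m)))^((1:ℝ)/(2*(m:ℝ))) := by
        rw [← Real.rpow_mul hE2nn]
        congr 1
        field_simp
    _ ≤ ((2*p*T)^m)^((1:ℝ)/(2*(m:ℝ))) := Real.rpow_le_rpow hE2nn hmoment (by positivity)
    _ = (2*p*T)^((1:ℝ)/2) := by
        rw [← Real.rpow_natCast (2*p*T) m, ← Real.rpow_mul (by positivity)]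
        congr 1
        field_simp
    _ = Real.sqrt (2*p*T) := (Real.sqrt_eq_rpow _).symm
    _ = Real.sqrt (2*p) * Real.sqrt T := Real.sqrt_mul (by positivity) T
    _ = Real.sqrt (2 * p) * Real.sqrt (∑ i, (a i) ^ 2 - (2 * (n:ℝ)) * ((∑ i, a i) / (2 * (n:ℝ))) ^ 2) := by
        rw [hT_eq, hb]
end
end

section
/- Let n be a positive integer, N = 2n, and let ε = (ε_1, ..., ε_N) be uniformly distributed on Ω = {ε ∈ {−1,1}^N : Σ_{i=1}^N ε_i = 0}, with expectation denoted E_S. Then for every a = (a_1, ..., a_N) ∈ ℝ^N, with b = (1/N) Σ_{i=1}^N a_i, one has Σ_{i=1}^N a_i² − N b² ≤ E_S |Σ_{i=1}^N a_i ε_i|². -/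
lemma mem_Omega {N : ℕ} {ε : Fin N → ℤ} :
    ε ∈ Omega N ↔ (∀ i, ε i = -1 ∨ ε i = 1) ∧ ∑ i, ε i = 0 := by
  simp [Omega, Fintype.mem_piFinset]

lemma comp_mem_Omega {N : ℕ} (σ : Equiv.Perm (Fin N)) {ε : Fin N → ℤ}
    (h : ε ∈ Omega N) : ε ∘ σ ∈ Omega N := by
  rw [mem_Omega] at h ⊢
  exact ⟨fun i => h.1 (σ i), by rw [← h.2]; exact Equiv.sum_comp σ ε⟩

lemma sum_comp_Omega {N : ℕ} (σ : Equiv.Perm (Fin N)) (f : (Fin N → ℤ) → ℤ) :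
    ∑ ε ∈ Omega N, f (ε ∘ σ) = ∑ ε ∈ Omega N, f ε := by
  apply Finset.sum_nbij' (i := fun ε => ε ∘ σ) (j := fun ε => ε ∘ σ.symm)
  · intro ε hε; exact comp_mem_Omega σ hε
  · intro ε hε; exact comp_mem_Omega σ.symm hε
  · intro ε _; funext i; simp
  · intro ε _; funext i; simp
  · intro ε _; rfl

lemma sq_one_of_mem {N : ℕ} {ε : Fin N → ℤ} (h : ε ∈ Omega N) (i : Fin N) :
    ε i * ε i = 1 := by
  rcases (mem_Omega.1 h).1 i with h1 | h1 <;> rw [h1] <;> ring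

lemma pair_sum_eq {N : ℕ} {i j k l : Fin N} (hij : i ≠ j) (hkl : k ≠ l) :
    ∑ ε ∈ Omega N, ε i * ε j = ∑ ε ∈ Omega N, ε k * ε l := by
  set τ := Equiv.swap i k with hτ
  have hli : τ l ≠ i := by
    intro h
    apply hkl
    have : l = τ i := by rw [← h]; exact (Equiv.symm_apply_apply τ l).symm ▸ by simp [hτ]
    rw [this, hτ, Equiv.swap_apply_left]
  set σ := (Equiv.swap j (τ l)).trans τ with hσ
  have hσi : σ i = k := by
    simp only [hσ, Equiv.trans_apply]
    rw [Equiv.swap_apply_of_ne_of_ne hij hli.symm]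
    simp [hτ, Equiv.swap_apply_left]
  have hσj : σ j = l := by
    simp only [hσ, Equiv.trans_apply, Equiv.swap_apply_left]
    simp [hτ]
  calc ∑ ε ∈ Omega N, ε i * ε j
      = ∑ ε ∈ Omega N, (ε ∘ σ) i * (ε ∘ σ) j := by
        rw [sum_comp_Omega σ (fun ε => ε i * ε j)]
    _ = ∑ ε ∈ Omega N, ε k * ε l := by
        simp only [Function.comp_apply, hσi, hσj]


lemma arith_aux (Q P C m : ℝ) (hC : 0 < C) (hm : 2 ≤ m) (hCS : P ^ 2 ≤ m * Q) :
    Q - m * (P / m) ^ 2 ≤ (C * Q + (-C / (m - 1)) * (P ^ 2 - Q)) / C := by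
  have hm0 : (0:ℝ) < m := by linarith
  have hm1 : (0:ℝ) < m - 1 := by linarith
  have lhs : Q - m * (P / m) ^ 2 = Q - P ^ 2 / m := by
    field_simp
  have rhs : (C * Q + (-C / (m - 1)) * (P ^ 2 - Q)) / C = Q - (P ^ 2 - Q) / (m - 1) := by
    field_simp
    ring
  rw [lhs, rhs, sub_le_sub_iff_left]
  rw [div_le_div_iff₀ hm1 hm0]
  nlinarith [hCS]

theorem stmt1 (n : ℕ) (hn : 0 < n) (a : Fin (2 * n) → ℝ) :
    ∑ i, (a i) ^ 2 - (2 * n : ℝ) * ((∑ i, a i) / (2 * n : ℝ)) ^ 2 ≤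
      ES (2 * n) fun ε => |∑ i, a i * (ε i : ℝ)| ^ 2 := by
  revert a
  set N := 2 * n with hN
  have hN2 : 2 ≤ N := by omega
  intro a
  set i0 : Fin N := ⟨0, by omega⟩
  set i1 : Fin N := ⟨1, by omega⟩
  have h01 : i0 ≠ i1 := by simp [i0, i1, Fin.ext_iff]
  -- Omega is nonempty
  have hne : (fun i : Fin N => if (i : ℕ) < n then (1 : ℤ) else -1) ∈ Omega N := by
    rw [mem_Omega]
    constructor
    · intro i; split <;> simp
    · rw [Fin.sum_univ_eq_sum_range (fun k => if k < n then (1 : ℤ) else -1)]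
      have hNn : N = n + n := by omega
      rw [hNn, Finset.sum_range_add]
      have e1 : ∑ k ∈ Finset.range n, (if k < n then (1:ℤ) else -1) = n := by
        rw [Finset.sum_congr rfl (fun k hk => if_pos (Finset.mem_range.1 hk))]
        simp
      have e2 : ∑ k ∈ Finset.range n, (if n + k < n then (1:ℤ) else -1) = -n := by
        rw [Finset.sum_congr rfl (fun k _ => if_neg (by omega))]
        simp
      rw [e1, e2]; ring
  have hC : 0 < (Omega N).card := Finset.card_pos.2 ⟨_, hne⟩
  set C : ℕ := (Omega N).card with hCdef
  clear_value C
  set T : ℤ := ∑ ε ∈ Omega N, ε i0 * ε i1 with hT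
  clear_value T
  -- the row-sum identity
  have hrow : (C : ℤ) + ((N : ℤ) - 1) * T = 0 := by
    have h1 : ∑ j, ∑ ε ∈ Omega N, ε i0 * ε j = 0 := by
      rw [Finset.sum_comm]
      apply Finset.sum_eq_zero
      intro ε hε
      rw [← Finset.mul_sum, (mem_Omega.1 hε).2, mul_zero]
    rw [← Finset.add_sum_erase _ _ (Finset.mem_univ i0)] at h1
    have h2 : ∑ ε ∈ Omega N, ε i0 * ε i0 = (C : ℤ) := by
      rw [Finset.sum_congr rfl (fun ε hε => sq_one_of_mem hε i0)]
      rw [hCdef]; simp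
    have h3 : ∀ j ∈ Finset.univ.erase i0, ∑ ε ∈ Omega N, ε i0 * ε j = T := by
      intro j hj
      rw [hT]; exact pair_sum_eq (Finset.ne_of_mem_erase hj).symm h01
    rw [h2, Finset.sum_congr rfl h3, Finset.sum_const] at h1
    have hcard : ((Finset.univ.erase i0).card : ℤ) = (N : ℤ) - 1 := by
      rw [Finset.card_erase_of_mem (Finset.mem_univ i0), Finset.card_univ, Fintype.card_fin]
      clear h1 h2 h3 hne hT hCdef
      omega
    rw [nsmul_eq_mul, hcard] at h1
    linarith
  -- expansion of the second moment
  have hexp : ∑ ε ∈ Omega N, |∑ i, a i * (ε i : ℝ)| ^ 2 =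
      (C : ℝ) * (∑ i, a i ^ 2) + (T : ℝ) * ((∑ i, a i) ^ 2 - ∑ i, a i ^ 2) := by
    have key : ∀ i j : Fin N, (∑ ε ∈ Omega N, ((ε i : ℝ) * (ε j : ℝ))) =
        if i = j then (C : ℝ) else (T : ℝ) := by
      intro i j
      by_cases h : i = j
      · subst h
        rw [if_pos rfl]
        have : ∀ ε ∈ Omega N, (ε i : ℝ) * (ε i : ℝ) = 1 := by
          intro ε hε
          have := sq_one_of_mem hε i
          exact_mod_cast congrArg (fun z : ℤ => (z : ℝ)) this
        rw [Finset.sum_congr rfl this, Finset.sum_const, hCdef]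
        simp
      · rw [if_neg h]
        have : ∑ ε ∈ Omega N, ((ε i : ℝ) * (ε j : ℝ)) = ((∑ ε ∈ Omega N, ε i * ε j : ℤ) : ℝ) := by
          push_cast; rfl
        rw [this, pair_sum_eq h h01, ← hT]
    calc ∑ ε ∈ Omega N, |∑ i, a i * (ε i : ℝ)| ^ 2
        = ∑ ε ∈ Omega N, ∑ i, ∑ j, (a i * a j) * ((ε i : ℝ) * (ε j : ℝ)) := by
          refine Finset.sum_congr rfl fun ε _ => ?_
          rw [sq_abs, sq, Finset.sum_mul_sum]
          refine Finset.sum_congr rfl fun i _ => Finset.sum_congr rfl fun j _ => by ring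
      _ = ∑ i, ∑ j, (a i * a j) * (∑ ε ∈ Omega N, ((ε i : ℝ) * (ε j : ℝ))) := by
          rw [Finset.sum_comm]
          refine Finset.sum_congr rfl fun i _ => ?_
          rw [Finset.sum_comm]
          refine Finset.sum_congr rfl fun j _ => ?_
          rw [Finset.mul_sum]
      _ = ∑ i, ∑ j, (a i * a j) * (if i = j then (C : ℝ) else (T : ℝ)) := by
          refine Finset.sum_congr rfl fun i _ => Finset.sum_congr rfl fun j _ => by rw [key]
      _ = ∑ i, ((∑ j, (a i * a j)) * (T : ℝ) + a i * a i * ((C : ℝ) - (T : ℝ))) := by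
          refine Finset.sum_congr rfl fun i _ => ?_
          have : ∀ j : Fin N, (a i * a j) * (if i = j then (C : ℝ) else (T : ℝ)) =
              (a i * a j) * (T : ℝ) + (if j = i then a i * a j * ((C : ℝ) - (T : ℝ)) else 0) := by
            intro j
            by_cases h : i = j
            · subst h; simp; ring
            · rw [if_neg h, if_neg (Ne.symm h), add_zero]
          rw [Finset.sum_congr rfl fun j _ => this j, Finset.sum_add_distrib,
            Finset.sum_ite_eq' Finset.univ i (fun j => a i * a j * ((C : ℝ) - (T : ℝ))),
            if_pos (Finset.mem_univ i), ← Finset.sum_mul]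
      _ = (C : ℝ) * (∑ i, a i ^ 2) + (T : ℝ) * ((∑ i, a i) ^ 2 - ∑ i, a i ^ 2) := by
          rw [Finset.sum_add_distrib, ← Finset.sum_mul, ← Finset.sum_mul]
          have h1 : ∑ i, ∑ j, a i * a j = (∑ i, a i) ^ 2 := by
            rw [sq, Finset.sum_mul_sum]
          have h2 : ∑ i, a i * a i = ∑ i, a i ^ 2 := by
            refine Finset.sum_congr rfl fun i _ => (sq (a i)) ▸ rfl
          rw [h1, h2]; ring
  -- value of T in ℝ
  have hm2 : (2:ℝ) ≤ 2 * (n:ℝ) := by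
    have : (1:ℝ) ≤ (n:ℝ) := by exact_mod_cast hn
    linarith
  have hCpos : (0:ℝ) < (C : ℝ) := by exact_mod_cast hC
  have hNr : ((N:ℕ) : ℝ) = 2 * (n:ℝ) := by rw [hN]; push_cast; ring
  have hTval : (T : ℝ) = -(C : ℝ) / (2 * (n:ℝ) - 1) := by
    have h1 : (C : ℝ) + ((2 * (n:ℝ)) - 1) * (T : ℝ) = 0 := by
      have := congrArg (fun z : ℤ => (z : ℝ)) hrow
      push_cast at this
      rw [hNr] at this
      linarith
    have h2 : (2 * (n:ℝ) - 1) ≠ 0 := by linarith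
    field_simp
    linarith
  have hCS : (∑ i, a i) ^ 2 ≤ (2 * (n:ℝ)) * ∑ i, a i ^ 2 := by
    have := sq_sum_le_card_mul_sum_sq (s := Finset.univ) (f := a)
    rw [Finset.card_univ, Fintype.card_fin] at this
    calc (∑ i, a i) ^ 2 ≤ ((N:ℕ) : ℝ) * ∑ i, a i ^ 2 := by exact_mod_cast this
      _ = (2 * (n:ℝ)) * ∑ i, a i ^ 2 := by rw [hNr]
  rw [ES, hexp, hTval, ← hCdef]
  exact arith_aux _ _ _ _ hCpos hm2 hCS
end

section
/- Let n be a positive integer, N = 2n, and let Π_N be the group of permutations of {1, ..., N} equipped with the uniform probability measure; expectation is denoted E_Π. For a ∈ ℝ^N define f_a(σ) = |Σ_{i=1}^n a_{σ(i)} − Σ_{i=n+1}^{2n} a_{σ(i)}|. Then for every real p ≥ 2 and b = (1/N) Σ_{i=1}^N a_i, one has (E_Π |f_a|^p)^{1/p} ≤ √(2p) · (Σ_{i=1}^N a_i² − N b²)^{1/2} ≤ √(2p) · (E_Π |f_a|²)^{1/2}. -/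
/-- Expectation with respect to the uniform probability measure on the permutation
group `Π_N` of `{1, ..., N}`. -/
noncomputable def EPi (N : ℕ) (g : Equiv.Perm (Fin N) → ℝ) : ℝ :=
  (∑ σ : Equiv.Perm (Fin N), g σ) / (Fintype.card (Equiv.Perm (Fin N)) : ℝ)

/-- `f_a(σ) = |∑_{i=1}^n a_{σ(i)} - ∑_{i=n+1}^{2n} a_{σ(i)}|`. -/
noncomputable def fA (n : ℕ) (a : Fin (2 * n) → ℝ) (σ : Equiv.Perm (Fin (2 * n))) : ℝ :=
  |∑ i : Fin (2 * n), (if (i : ℕ) < n then a (σ i) else -a (σ i))|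

namespace Stmt3Aux

def φ (n : ℕ) : (Fin n ⊕ Fin n) ≃ Fin (2 * n) :=
  finSumFinEquiv.trans (finCongr (two_mul n).symm)

lemma phi_inl (n : ℕ) (j : Fin n) : ((φ n (Sum.inl j) : Fin (2 * n)) : ℕ) = (j : ℕ) := by
  simp [φ]

lemma phi_inr (n : ℕ) (j : Fin n) : ((φ n (Sum.inr j) : Fin (2 * n)) : ℕ) = n + (j : ℕ) := by
  simp [φ]; omega

lemma sum_split (n : ℕ) (g : Fin (2 * n) → ℝ) :
    ∑ i, g i = ∑ j : Fin n, (g (φ n (Sum.inl j)) + g (φ n (Sum.inr j))) := by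
  rw [← Equiv.sum_comp (φ n) g, Fintype.sum_sum_type, ← Finset.sum_add_distrib]

noncomputable def F (n : ℕ) (c : Fin (2 * n) → ℝ) (σ : Equiv.Perm (Fin (2 * n))) : ℝ :=
  ∑ j : Fin n, (c (σ (φ n (Sum.inl j))) - c (σ (φ n (Sum.inr j))))

def flipFun (n : ℕ) (ε : Fin n → Bool) : Fin n ⊕ Fin n → Fin n ⊕ Fin n
  | .inl j => if ε j then .inr j else .inl j
  | .inr j => if ε j then .inl j else .inr j

lemma flipFun_invol (n : ℕ) (ε : Fin n → Bool) : Function.Involutive (flipFun n ε) := by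
  rintro (j | j) <;> by_cases h : ε j <;> simp [flipFun, h]

def τ (n : ℕ) (ε : Fin n → Bool) : Equiv.Perm (Fin (2 * n)) :=
  (φ n).permCongr (flipFun_invol n ε).toPerm

lemma tau_phi (n : ℕ) (ε : Fin n → Bool) (x : Fin n ⊕ Fin n) :
    τ n ε (φ n x) = φ n (flipFun n ε x) := by
  simp [τ, Equiv.permCongr_apply]

lemma fA_eq (n : ℕ) (a : Fin (2 * n) → ℝ) (σ : Equiv.Perm (Fin (2 * n))) :
    fA n a σ = |F n a σ| := by
  unfold fA F
  congr 1
  rw [sum_split n (fun i => if (i : ℕ) < n then a (σ i) else -a (σ i))]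
  refine Finset.sum_congr rfl fun j _ => ?_
  have h1 : ((φ n (Sum.inl j) : Fin (2 * n)) : ℕ) < n := by rw [phi_inl]; exact j.isLt
  have h2 : ¬ ((φ n (Sum.inr j) : Fin (2 * n)) : ℕ) < n := by rw [phi_inr]; omega
  simp only [if_pos h1, if_neg h2]
  ring

lemma F_center (n : ℕ) (a : Fin (2 * n) → ℝ) (b : ℝ) (σ : Equiv.Perm (Fin (2 * n))) :
    F n (fun i => a i - b) σ = F n a σ := by
  unfold F; exact Finset.sum_congr rfl fun j _ => by ring

lemma F_mul_tau (n : ℕ) (c : Fin (2 * n) → ℝ) (σ : Equiv.Perm (Fin (2 * n)))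
    (ε : Fin n → Bool) :
    F n c (σ * τ n ε) = ∑ j : Fin n, (if ε j then (-1 : ℝ) else 1) *
      (c (σ (φ n (Sum.inl j))) - c (σ (φ n (Sum.inr j)))) := by
  unfold F
  refine Finset.sum_congr rfl fun j _ => ?_
  by_cases h : ε j <;>
    simp [Equiv.Perm.mul_apply, tau_phi, flipFun, h] <;> ring

lemma sum_exp_eq (n : ℕ) (c : Fin (2 * n) → ℝ) (t : ℝ) :
    ∑ σ : Equiv.Perm (Fin (2 * n)), Real.exp (t * F n c σ)
      = ∑ σ : Equiv.Perm (Fin (2 * n)), ∏ j : Fin n,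
          Real.cosh (t * (c (σ (φ n (Sum.inl j))) - c (σ (φ n (Sum.inr j))))) := by
  have h2n : ((2 : ℝ) ^ n) ≠ 0 := by positivity
  apply mul_left_cancel₀ h2n
  have key : ∀ ε : Fin n → Bool,
      ∑ σ : Equiv.Perm (Fin (2 * n)), Real.exp (t * F n c σ)
        = ∑ σ : Equiv.Perm (Fin (2 * n)), Real.exp (t * F n c (σ * τ n ε)) := by
    intro ε
    exact (Equiv.sum_comp (Equiv.mulRight (τ n ε))
      (fun σ => Real.exp (t * F n c σ))).symm
  calc (2 : ℝ) ^ n * ∑ σ : Equiv.Perm (Fin (2 * n)), Real.exp (t * F n c σ)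
      = ∑ _ε : Fin n → Bool, ∑ σ : Equiv.Perm (Fin (2 * n)), Real.exp (t * F n c σ) := by
        rw [Finset.sum_const, Finset.card_univ, nsmul_eq_mul]
        norm_num
    _ = ∑ ε : Fin n → Bool, ∑ σ : Equiv.Perm (Fin (2 * n)),
          Real.exp (t * F n c (σ * τ n ε)) := by
        exact Finset.sum_congr rfl fun ε _ => key ε
    _ = ∑ σ : Equiv.Perm (Fin (2 * n)), ∑ ε : Fin n → Bool,
          Real.exp (t * F n c (σ * τ n ε)) := Finset.sum_comm
    _ = ∑ σ : Equiv.Perm (Fin (2 * n)), ∑ ε : Fin n → Bool, ∏ j : Fin n,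
          Real.exp (t * ((if ε j then (-1 : ℝ) else 1) *
            (c (σ (φ n (Sum.inl j))) - c (σ (φ n (Sum.inr j)))))) := by
        refine Finset.sum_congr rfl fun σ _ => Finset.sum_congr rfl fun ε _ => ?_
        rw [F_mul_tau, Finset.mul_sum, Real.exp_sum]
    _ = ∑ σ : Equiv.Perm (Fin (2 * n)), ∏ j : Fin n, ∑ b : Bool,
          Real.exp (t * ((if b then (-1 : ℝ) else 1) *
            (c (σ (φ n (Sum.inl j))) - c (σ (φ n (Sum.inr j)))))) := by
        refine Finset.sum_congr rfl fun σ _ => ?_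
        rw [Fintype.prod_sum]
    _ = (2 : ℝ) ^ n * ∑ σ : Equiv.Perm (Fin (2 * n)), ∏ j : Fin n,
          Real.cosh (t * (c (σ (φ n (Sum.inl j))) - c (σ (φ n (Sum.inr j))))) := by
        rw [Finset.mul_sum]
        refine Finset.sum_congr rfl fun σ _ => ?_
        have h2 : (2 : ℝ) ^ n = ∏ _j : Fin n, (2 : ℝ) := by simp
        rw [h2, ← Finset.prod_mul_distrib]
        refine Finset.prod_congr rfl fun j _ => ?_
        have hb : ∀ b : Bool, t * ((if b then (-1 : ℝ) else 1) *
            (c (σ (φ n (Sum.inl j))) - c (σ (φ n (Sum.inr j)))))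
            = if b then -(t * (c (σ (φ n (Sum.inl j))) - c (σ (φ n (Sum.inr j)))))
              else t * (c (σ (φ n (Sum.inl j))) - c (σ (φ n (Sum.inr j)))) := by
          intro b; cases b <;> simp <;> ring
        rw [Finset.sum_congr rfl fun b _ => by rw [hb b]]
        rw [Fintype.sum_bool, if_pos rfl, if_neg (by simp), Real.cosh_eq]
        ring

lemma sum_G_sq_le (n : ℕ) (c : Fin (2 * n) → ℝ) (σ : Equiv.Perm (Fin (2 * n))) :
    ∑ j : Fin n, (c (σ (φ n (Sum.inl j))) - c (σ (φ n (Sum.inr j)))) ^ 2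
      ≤ 2 * ∑ i, c i ^ 2 := by
  have h1 : ∑ j : Fin n, ((c (σ (φ n (Sum.inl j)))) ^ 2 + (c (σ (φ n (Sum.inr j)))) ^ 2)
      = ∑ i, c i ^ 2 := by
    rw [← sum_split n (fun i => c (σ i) ^ 2), Equiv.sum_comp σ (fun i => c i ^ 2)]
  calc ∑ j : Fin n, (c (σ (φ n (Sum.inl j))) - c (σ (φ n (Sum.inr j)))) ^ 2
      ≤ ∑ j : Fin n, 2 * ((c (σ (φ n (Sum.inl j)))) ^ 2 + (c (σ (φ n (Sum.inr j)))) ^ 2) := by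
        refine Finset.sum_le_sum fun j _ => ?_
        nlinarith [sq_nonneg (c (σ (φ n (Sum.inl j))) + c (σ (φ n (Sum.inr j))))]
    _ = 2 * ∑ i, c i ^ 2 := by rw [← Finset.mul_sum, h1]

lemma mgf_bound (n : ℕ) (c : Fin (2 * n) → ℝ) (t : ℝ) :
    ∑ σ : Equiv.Perm (Fin (2 * n)), Real.exp (t * F n c σ)
      ≤ (Fintype.card (Equiv.Perm (Fin (2 * n))) : ℝ) * Real.exp (t ^ 2 * ∑ i, c i ^ 2) := by
  rw [sum_exp_eq]
  have hbd : ∀ σ : Equiv.Perm (Fin (2 * n)), ∏ j : Fin n,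
      Real.cosh (t * (c (σ (φ n (Sum.inl j))) - c (σ (φ n (Sum.inr j)))))
        ≤ Real.exp (t ^ 2 * ∑ i, c i ^ 2) := by
    intro σ
    calc ∏ j : Fin n, Real.cosh (t * (c (σ (φ n (Sum.inl j))) - c (σ (φ n (Sum.inr j)))))
        ≤ ∏ j : Fin n, Real.exp ((t * (c (σ (φ n (Sum.inl j))) - c (σ (φ n (Sum.inr j))))) ^ 2 / 2) := by
          refine Finset.prod_le_prod (fun j _ => (Real.cosh_pos _).le)
            (fun j _ => Real.cosh_le_exp_half_sq _)
      _ = Real.exp (∑ j : Fin n,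
            (t * (c (σ (φ n (Sum.inl j))) - c (σ (φ n (Sum.inr j))))) ^ 2 / 2) := by
          rw [Real.exp_sum]
      _ ≤ Real.exp (t ^ 2 * ∑ i, c i ^ 2) := by
          apply Real.exp_le_exp.2
          have := sum_G_sq_le n c σ
          have expand : ∑ j : Fin n,
              (t * (c (σ (φ n (Sum.inl j))) - c (σ (φ n (Sum.inr j))))) ^ 2 / 2
              = t ^ 2 / 2 * ∑ j : Fin n,
                  (c (σ (φ n (Sum.inl j))) - c (σ (φ n (Sum.inr j)))) ^ 2 := by
            rw [Finset.mul_sum]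
            exact Finset.sum_congr rfl fun j _ => by ring
          rw [expand]
          nlinarith [sq_nonneg t]
  calc ∑ σ : Equiv.Perm (Fin (2 * n)), ∏ j : Fin n,
        Real.cosh (t * (c (σ (φ n (Sum.inl j))) - c (σ (φ n (Sum.inr j)))))
      ≤ ∑ _σ : Equiv.Perm (Fin (2 * n)), Real.exp (t ^ 2 * ∑ i, c i ^ 2) :=
        Finset.sum_le_sum fun σ _ => hbd σ
    _ = (Fintype.card (Equiv.Perm (Fin (2 * n))) : ℝ) * Real.exp (t ^ 2 * ∑ i, c i ^ 2) := by
        rw [Finset.sum_const, Finset.card_univ, nsmul_eq_mul]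


lemma cross_nonpos (n : ℕ) (hn : 0 < n) (c : Fin (2 * n) → ℝ) (hc : ∑ i, c i = 0)
    (u v : Fin (2 * n)) (huv : u ≠ v) :
    ∑ σ : Equiv.Perm (Fin (2 * n)), c (σ u) * c (σ v) ≤ 0 := by
  set T := ∑ σ : Equiv.Perm (Fin (2 * n)), c (σ u) * c (σ v) with hT
  have hw : ∀ w : Fin (2 * n), w ≠ u →
      ∑ σ : Equiv.Perm (Fin (2 * n)), c (σ u) * c (σ w) = T := by
    intro w hwu
    rcases eq_or_ne w v with rfl | hwv
    · rfl
    · rw [hT]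
      refine Fintype.sum_equiv (Equiv.mulRight (Equiv.swap w v)) _ _ fun σ => ?_
      simp only [Equiv.coe_mulRight, Equiv.Perm.mul_apply]
      rw [Equiv.swap_apply_of_ne_of_ne (Ne.symm hwu) (Ne.symm huv).symm,
        Equiv.swap_apply_right]
  have h0 : (0 : ℝ) = ∑ σ : Equiv.Perm (Fin (2 * n)), ∑ w : Fin (2 * n),
      c (σ u) * c (σ w) := by
    symm
    calc ∑ σ : Equiv.Perm (Fin (2 * n)), ∑ w : Fin (2 * n), c (σ u) * c (σ w)
        = ∑ σ : Equiv.Perm (Fin (2 * n)), c (σ u) * ∑ w : Fin (2 * n), c (σ w) := by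
          exact Finset.sum_congr rfl fun σ _ => (Finset.mul_sum _ _ _).symm
      _ = 0 := by
          refine Finset.sum_eq_zero fun σ _ => ?_
          rw [Equiv.sum_comp σ c, hc, mul_zero]
  have hsplit : ∑ σ : Equiv.Perm (Fin (2 * n)), ∑ w : Fin (2 * n), c (σ u) * c (σ w)
      = (∑ σ : Equiv.Perm (Fin (2 * n)), c (σ u) ^ 2) + (2 * n - 1 : ℝ) * T := by
    have hstep : ∀ σ : Equiv.Perm (Fin (2 * n)), ∑ w : Fin (2 * n), c (σ u) * c (σ w)
        = c (σ u) ^ 2 + ∑ w ∈ Finset.univ.erase u, c (σ u) * c (σ w) := by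
      intro σ
      rw [← Finset.add_sum_erase _ _ (Finset.mem_univ u)]
      ring_nf
    rw [Finset.sum_congr rfl fun σ _ => hstep σ, Finset.sum_add_distrib]
    congr 1
    calc ∑ σ : Equiv.Perm (Fin (2 * n)), ∑ w ∈ Finset.univ.erase u, c (σ u) * c (σ w)
        = ∑ w ∈ Finset.univ.erase u, ∑ σ : Equiv.Perm (Fin (2 * n)),
            c (σ u) * c (σ w) := Finset.sum_comm
      _ = ∑ w ∈ Finset.univ.erase u, T :=
          Finset.sum_congr rfl fun w hw' => hw w (Finset.ne_of_mem_erase hw')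
      _ = ((Finset.univ.erase u).card : ℝ) * T := by rw [Finset.sum_const, nsmul_eq_mul]
      _ = (2 * n - 1 : ℝ) * T := by
          rw [Finset.card_erase_of_mem (Finset.mem_univ u), Finset.card_univ,
            Fintype.card_fin]
          congr 1
          have h1 : 1 ≤ 2 * n := by omega
          push_cast [h1]
          ring
  have hQ : 0 ≤ ∑ σ : Equiv.Perm (Fin (2 * n)), c (σ u) ^ 2 :=
    Finset.sum_nonneg fun σ _ => sq_nonneg _
  have hpos : (0 : ℝ) < 2 * n - 1 := by
    have : (1 : ℝ) ≤ n := by exact_mod_cast hn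
    linarith
  nlinarith [h0, hsplit]

lemma sum_eps_prod (n : ℕ) (j k : Fin n) (hjk : j ≠ k) :
    ∑ ε : Fin n → Bool, (if ε j then (-1 : ℝ) else 1) * (if ε k then (-1 : ℝ) else 1)
      = 0 := by
  have hinv : Function.Involutive
      (fun ε : Fin n → Bool => Function.update ε j (!(ε j))) := by
    intro ε
    funext m
    rcases eq_or_ne m j with rfl | hm
    · simp
    · simp [Function.update_of_ne hm]
  have key := Equiv.sum_comp hinv.toPerm
    (fun ε : Fin n → Bool =>
      (if ε j then (-1 : ℝ) else 1) * (if ε k then (-1 : ℝ) else 1))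
  have flip : ∀ ε : Fin n → Bool,
      (if (Function.update ε j (!(ε j))) j then (-1 : ℝ) else 1) *
        (if (Function.update ε j (!(ε j))) k then (-1 : ℝ) else 1)
      = -((if ε j then (-1 : ℝ) else 1) * (if ε k then (-1 : ℝ) else 1)) := by
    intro ε
    rw [Function.update_self, Function.update_of_ne (Ne.symm hjk)]
    cases h : ε j <;> cases hk : ε k <;> simp
  have key2 : ∑ ε : Fin n → Bool,
      (if ε j then (-1 : ℝ) else 1) * (if ε k then (-1 : ℝ) else 1)
      = -∑ ε : Fin n → Bool,
          (if ε j then (-1 : ℝ) else 1) * (if ε k then (-1 : ℝ) else 1) := by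
    conv_lhs => rw [← key]
    rw [← Finset.sum_neg_distrib]
    refine Finset.sum_congr rfl fun ε _ => ?_
    exact flip ε
  linarith [key2]

lemma sum_sq_eps (n : ℕ) (d : Fin n → ℝ) :
    ∑ ε : Fin n → Bool, (∑ j : Fin n, (if ε j then (-1 : ℝ) else 1) * d j) ^ 2
      = 2 ^ n * ∑ j : Fin n, d j ^ 2 := by
  have expand : ∀ ε : Fin n → Bool,
      (∑ j : Fin n, (if ε j then (-1 : ℝ) else 1) * d j) ^ 2
      = ∑ j : Fin n, ∑ k : Fin n,
          ((if ε j then (-1 : ℝ) else 1) * d j) * ((if ε k then (-1 : ℝ) else 1) * d k) := by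
    intro ε
    rw [sq, Finset.sum_mul_sum]
  rw [Finset.sum_congr rfl fun ε _ => expand ε]
  rw [Finset.sum_comm]
  have inner : ∀ j : Fin n,
      ∑ ε : Fin n → Bool, ∑ k : Fin n,
        ((if ε j then (-1 : ℝ) else 1) * d j) * ((if ε k then (-1 : ℝ) else 1) * d k)
      = 2 ^ n * d j ^ 2 := by
    intro j
    rw [Finset.sum_comm]
    have hsteps : ∀ k : Fin n, k ∈ Finset.univ.erase j →
        ∑ ε : Fin n → Bool,
          ((if ε j then (-1 : ℝ) else 1) * d j) * ((if ε k then (-1 : ℝ) else 1) * d k)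
        = 0 := by
      intro k hk
      have : ∀ ε : Fin n → Bool,
          ((if ε j then (-1 : ℝ) else 1) * d j) * ((if ε k then (-1 : ℝ) else 1) * d k)
          = (d j * d k) * ((if ε j then (-1 : ℝ) else 1) * (if ε k then (-1 : ℝ) else 1)) := by
        intro ε; ring
      rw [Finset.sum_congr rfl fun ε _ => this ε, ← Finset.mul_sum,
        sum_eps_prod n j k (Finset.ne_of_mem_erase hk).symm, mul_zero]
    rw [← Finset.add_sum_erase _ _ (Finset.mem_univ j),
      Finset.sum_eq_zero hsteps, add_zero]
    have : ∀ ε : Fin n → Bool,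
        ((if ε j then (-1 : ℝ) else 1) * d j) * ((if ε j then (-1 : ℝ) else 1) * d j)
        = d j ^ 2 := by
      intro ε; cases h : ε j <;> simp <;> ring
    rw [Finset.sum_congr rfl fun ε _ => this ε, Finset.sum_const, Finset.card_univ,
      nsmul_eq_mul]
    norm_num
  rw [Finset.sum_congr rfl fun j _ => inner j, ← Finset.mul_sum]

lemma sum_F_sq (n : ℕ) (c : Fin (2 * n) → ℝ) :
    ∑ σ : Equiv.Perm (Fin (2 * n)), (F n c σ) ^ 2
      = ∑ σ : Equiv.Perm (Fin (2 * n)), ∑ j : Fin n,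
          (c (σ (φ n (Sum.inl j))) - c (σ (φ n (Sum.inr j)))) ^ 2 := by
  have h2n : ((2 : ℝ) ^ n) ≠ 0 := by positivity
  apply mul_left_cancel₀ h2n
  have key : ∀ ε : Fin n → Bool,
      ∑ σ : Equiv.Perm (Fin (2 * n)), (F n c σ) ^ 2
        = ∑ σ : Equiv.Perm (Fin (2 * n)), (F n c (σ * τ n ε)) ^ 2 := fun ε =>
    (Equiv.sum_comp (Equiv.mulRight (τ n ε)) (fun σ => (F n c σ) ^ 2)).symm
  calc (2 : ℝ) ^ n * ∑ σ : Equiv.Perm (Fin (2 * n)), (F n c σ) ^ 2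
      = ∑ _ε : Fin n → Bool, ∑ σ : Equiv.Perm (Fin (2 * n)), (F n c σ) ^ 2 := by
        rw [Finset.sum_const, Finset.card_univ, nsmul_eq_mul]
        norm_num
    _ = ∑ ε : Fin n → Bool, ∑ σ : Equiv.Perm (Fin (2 * n)), (F n c (σ * τ n ε)) ^ 2 :=
        Finset.sum_congr rfl fun ε _ => key ε
    _ = ∑ σ : Equiv.Perm (Fin (2 * n)), ∑ ε : Fin n → Bool, (F n c (σ * τ n ε)) ^ 2 :=
        Finset.sum_comm
    _ = ∑ σ : Equiv.Perm (Fin (2 * n)), ∑ ε : Fin n → Bool,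
          (∑ j : Fin n, (if ε j then (-1 : ℝ) else 1) *
            (c (σ (φ n (Sum.inl j))) - c (σ (φ n (Sum.inr j))))) ^ 2 := by
        refine Finset.sum_congr rfl fun σ _ => Finset.sum_congr rfl fun ε _ => ?_
        rw [F_mul_tau]
    _ = ∑ σ : Equiv.Perm (Fin (2 * n)), 2 ^ n * ∑ j : Fin n,
          (c (σ (φ n (Sum.inl j))) - c (σ (φ n (Sum.inr j)))) ^ 2 := by
        refine Finset.sum_congr rfl fun σ _ => ?_
        exact sum_sq_eps n _
    _ = (2 : ℝ) ^ n * ∑ σ : Equiv.Perm (Fin (2 * n)), ∑ j : Fin n,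
          (c (σ (φ n (Sum.inl j))) - c (σ (φ n (Sum.inr j)))) ^ 2 := by
        rw [Finset.mul_sum]

lemma sq_lower (n : ℕ) (hn : 0 < n) (c : Fin (2 * n) → ℝ) (hc : ∑ i, c i = 0) :
    (Fintype.card (Equiv.Perm (Fin (2 * n))) : ℝ) * ∑ i, c i ^ 2
      ≤ ∑ σ : Equiv.Perm (Fin (2 * n)), (F n c σ) ^ 2 := by
  rw [sum_F_sq]
  have expand : ∀ σ : Equiv.Perm (Fin (2 * n)),
      ∑ j : Fin n, (c (σ (φ n (Sum.inl j))) - c (σ (φ n (Sum.inr j)))) ^ 2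
      = (∑ i, c i ^ 2) - 2 * ∑ j : Fin n,
          c (σ (φ n (Sum.inl j))) * c (σ (φ n (Sum.inr j))) := by
    intro σ
    have h1 : ∑ j : Fin n, ((c (σ (φ n (Sum.inl j)))) ^ 2 + (c (σ (φ n (Sum.inr j)))) ^ 2)
        = ∑ i, c i ^ 2 := by
      rw [← sum_split n (fun i => c (σ i) ^ 2), Equiv.sum_comp σ (fun i => c i ^ 2)]
    rw [← h1, Finset.mul_sum, ← Finset.sum_sub_distrib]
    exact Finset.sum_congr rfl fun j _ => by ring
  rw [Finset.sum_congr rfl fun σ _ => expand σ, Finset.sum_sub_distrib,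
    Finset.sum_const, Finset.card_univ, nsmul_eq_mul]
  have hcross : ∑ σ : Equiv.Perm (Fin (2 * n)), 2 * ∑ j : Fin n,
      c (σ (φ n (Sum.inl j))) * c (σ (φ n (Sum.inr j))) ≤ 0 := by
    have h1 : ∑ σ : Equiv.Perm (Fin (2 * n)), ∑ j : Fin n,
        c (σ (φ n (Sum.inl j))) * c (σ (φ n (Sum.inr j))) ≤ 0 := by
      rw [Finset.sum_comm]
      refine Finset.sum_nonpos fun j _ => ?_
      refine cross_nonpos n hn c hc _ _ ?_
      intro h
      have := (φ n).injective h
      simp at this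
    calc ∑ σ : Equiv.Perm (Fin (2 * n)), 2 * ∑ j : Fin n,
          c (σ (φ n (Sum.inl j))) * c (σ (φ n (Sum.inr j)))
        = 2 * ∑ σ : Equiv.Perm (Fin (2 * n)), ∑ j : Fin n,
            c (σ (φ n (Sum.inl j))) * c (σ (φ n (Sum.inr j))) := by
          rw [Finset.mul_sum]
      _ ≤ 0 := by linarith
  linarith


lemma abs_rpow_le (p lam x : ℝ) (hp : 0 < p) (hl : 0 < lam) :
    |x| ^ p ≤ (p / (Real.exp 1 * lam)) ^ p *
      (Real.exp (lam * x) + Real.exp (-(lam * x))) := by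
  have hK : (0 : ℝ) < (p / (Real.exp 1 * lam)) ^ p :=
    Real.rpow_pos_of_pos (by positivity) p
  have key : |x| ^ p ≤ (p / (Real.exp 1 * lam)) ^ p * Real.exp (lam * |x|) := by
    rcases eq_or_lt_of_le (abs_nonneg x) with h0 | h0
    · rw [← h0, Real.zero_rpow hp.ne']
      positivity
    · have lhs_eq : |x| ^ p = Real.exp (Real.log |x| * p) :=
        Real.rpow_def_of_pos h0 p
      have rhs_eq : (p / (Real.exp 1 * lam)) ^ p * Real.exp (lam * |x|)
          = Real.exp (Real.log (p / (Real.exp 1 * lam)) * p + lam * |x|) := by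
        rw [Real.rpow_def_of_pos (by positivity), ← Real.exp_add]
      rw [lhs_eq, rhs_eq]
      apply Real.exp_le_exp.2
      have h1 : Real.log (lam * |x| / p) ≤ lam * |x| / p - 1 :=
        Real.log_le_sub_one_of_pos (by positivity)
      have hlog : Real.log (lam * |x| / p) = Real.log lam + Real.log |x| - Real.log p := by
        rw [Real.log_div (by positivity) hp.ne', Real.log_mul hl.ne' h0.ne']
      have hlog2 : Real.log (p / (Real.exp 1 * lam)) = Real.log p - 1 - Real.log lam := by
        rw [Real.log_div hp.ne' (by positivity), Real.log_mul (Real.exp_pos 1).ne' hl.ne',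
          Real.log_exp]
        ring
      rw [hlog] at h1
      have h2 := mul_le_mul_of_nonneg_left h1 hp.le
      have h3 : p * (lam * |x| / p - 1) = lam * |x| - p := by
        field_simp
      rw [h3] at h2
      rw [hlog2]
      nlinarith
  refine key.trans ?_
  have h4 : Real.exp (lam * |x|) ≤ Real.exp (lam * x) + Real.exp (-(lam * x)) := by
    rcases abs_cases x with ⟨h, _⟩ | ⟨h, _⟩
    · rw [h]
      nlinarith [Real.exp_pos (-(lam * x))]
    · rw [h, mul_neg]
      nlinarith [Real.exp_pos (lam * x)]
  nlinarith

end Stmt3Aux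

open Stmt3Aux

theorem stmt3 (n : ℕ) (hn : 0 < n) (a : Fin (2 * n) → ℝ) (p : ℝ) (hp : 2 ≤ p) :
    (EPi (2 * n) fun σ => fA n a σ ^ p) ^ (1 / p) ≤
        Real.sqrt (2 * p) *
          Real.sqrt (∑ i, (a i) ^ 2 - (2 * n : ℝ) * ((∑ i, a i) / (2 * n : ℝ)) ^ 2) ∧
      Real.sqrt (2 * p) *
          Real.sqrt (∑ i, (a i) ^ 2 - (2 * n : ℝ) * ((∑ i, a i) / (2 * n : ℝ)) ^ 2) ≤
        Real.sqrt (2 * p) * Real.sqrt (EPi (2 * n) fun σ => fA n a σ ^ 2) := by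
  classical
  have hp0 : 0 < p := by linarith
  have hn' : (0 : ℝ) < n := by exact_mod_cast hn
  set M : ℝ := (Fintype.card (Equiv.Perm (Fin (2 * n))) : ℝ) with hM
  have hM0 : 0 < M := by
    rw [hM]
    exact_mod_cast Fintype.card_pos
  set b : ℝ := (∑ i, a i) / (2 * n : ℝ) with hb
  set c : Fin (2 * n) → ℝ := fun i => a i - b with hcdef
  have hsa : ∑ i, a i = (2 * n : ℝ) * b := by
    rw [hb]
    field_simp
  have hsum_c : ∑ i, c i = 0 := by
    simp only [hcdef]
    rw [Finset.sum_sub_distrib, Finset.sum_const, Finset.card_univ, Fintype.card_fin,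
      nsmul_eq_mul, hsa]
    push_cast
    ring
  set V : ℝ := ∑ i, c i ^ 2 with hV
  have hV0 : 0 ≤ V := Finset.sum_nonneg fun i _ => sq_nonneg _
  have hVa : V = ∑ i, a i ^ 2 - (2 * n : ℝ) * b ^ 2 := by
    have expand : ∀ i, c i ^ 2 = a i ^ 2 - 2 * b * a i + b ^ 2 := fun i => by
      simp only [hcdef]; ring
    rw [hV, Finset.sum_congr rfl fun i _ => expand i, Finset.sum_add_distrib,
      Finset.sum_sub_distrib, ← Finset.mul_sum, Finset.sum_const, Finset.card_univ,
      Fintype.card_fin, nsmul_eq_mul, hsa]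
    push_cast
    ring
  have fabs : ∀ σ : Equiv.Perm (Fin (2 * n)), fA n a σ = |F n c σ| := by
    intro σ
    rw [fA_eq n a σ, hcdef, F_center n a b σ]
  have part2 : Real.sqrt (2 * p) * Real.sqrt (∑ i, a i ^ 2 - (2 * n : ℝ) * b ^ 2) ≤
      Real.sqrt (2 * p) * Real.sqrt (EPi (2 * n) fun σ => fA n a σ ^ 2) := by
    refine mul_le_mul_of_nonneg_left ?_ (Real.sqrt_nonneg _)
    refine Real.sqrt_le_sqrt ?_
    rw [← hVa]
    have hEq : (EPi (2 * n) fun σ => fA n a σ ^ 2)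
        = (∑ σ : Equiv.Perm (Fin (2 * n)), (F n c σ) ^ 2) / M := by
      unfold EPi
      rw [← hM]
      congr 1
      exact Finset.sum_congr rfl fun σ _ => by simp only [fabs σ, sq_abs]
    rw [hEq, le_div_iff₀ hM0, mul_comm]
    exact sq_lower n hn c hsum_c
  rcases eq_or_lt_of_le hV0 with hVz | hVpos
  · -- degenerate case V = 0
    have hc0 : ∀ i, c i = 0 := by
      intro i
      have h := (Finset.sum_eq_zero_iff_of_nonneg
        (fun i (_ : i ∈ Finset.univ) => sq_nonneg (c i))).1 hVz.symm i (Finset.mem_univ i)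
      exact pow_eq_zero_iff (two_ne_zero) |>.1 h
    have hF0 : ∀ σ : Equiv.Perm (Fin (2 * n)), fA n a σ = 0 := by
      intro σ
      rw [fabs σ]
      unfold F
      simp [hc0]
    refine ⟨?_, part2⟩
    have hzero : (EPi (2 * n) fun σ => fA n a σ ^ p) = 0 := by
      unfold EPi
      rw [Finset.sum_eq_zero fun σ _ => by
        simp only [hF0 σ, Real.zero_rpow hp0.ne']]
      simp
    rw [hzero, Real.zero_rpow (by positivity : (1 : ℝ) / p ≠ 0)]
    positivity
  · -- main case V > 0
    set lam : ℝ := Real.sqrt (p / (2 * V)) with hlam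
    have hlam0 : 0 < lam := Real.sqrt_pos.2 (by positivity)
    have hlam2 : lam ^ 2 = p / (2 * V) := Real.sq_sqrt (by positivity)
    set W : ℝ := Real.sqrt (2 * p * V) with hW
    have hW0 : 0 < W := Real.sqrt_pos.2 (by positivity)
    have hplam : p / lam = W := by
      rw [eq_comm, eq_div_iff hlam0.ne', hW, hlam, ← Real.sqrt_mul (by positivity)]
      rw [show 2 * p * V * (p / (2 * V)) = p ^ 2 by (field_simp)]
      exact Real.sqrt_sq hp0.le
    have hlamV : lam ^ 2 * V = p / 2 := by
      rw [hlam2]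
      field_simp
    have hpt : ∀ σ : Equiv.Perm (Fin (2 * n)), fA n a σ ^ p ≤ (W / Real.exp 1) ^ p *
        (Real.exp (lam * F n c σ) + Real.exp (-(lam * F n c σ))) := by
      intro σ
      rw [fabs σ]
      have h := abs_rpow_le p lam (F n c σ) hp0 hlam0
      rwa [show p / (Real.exp 1 * lam) = W / Real.exp 1 by
        (rw [← hplam]; ring)] at h
    have hmgf1 := mgf_bound n c lam
    have hmgf2 := mgf_bound n c (-lam)
    simp only [neg_mul, neg_sq] at hmgf2
    rw [← hM] at hmgf1 hmgf2
    have hsum : ∑ σ : Equiv.Perm (Fin (2 * n)), fA n a σ ^ p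
        ≤ (W / Real.exp 1) ^ p * (2 * M * Real.exp (p / 2)) := by
      have hKnn : (0 : ℝ) ≤ (W / Real.exp 1) ^ p :=
        Real.rpow_nonneg (by positivity) p
      calc ∑ σ : Equiv.Perm (Fin (2 * n)), fA n a σ ^ p
          ≤ ∑ σ : Equiv.Perm (Fin (2 * n)), (W / Real.exp 1) ^ p *
              (Real.exp (lam * F n c σ) + Real.exp (-(lam * F n c σ))) :=
            Finset.sum_le_sum fun σ _ => hpt σ
        _ = (W / Real.exp 1) ^ p *
              ((∑ σ : Equiv.Perm (Fin (2 * n)), Real.exp (lam * F n c σ)) +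
               (∑ σ : Equiv.Perm (Fin (2 * n)), Real.exp (-(lam * F n c σ)))) := by
            rw [← Finset.mul_sum, Finset.sum_add_distrib]
        _ ≤ (W / Real.exp 1) ^ p *
              (M * Real.exp (lam ^ 2 * V) + M * Real.exp (lam ^ 2 * V)) := by
            refine mul_le_mul_of_nonneg_left (add_le_add hmgf1 hmgf2) hKnn
        _ = (W / Real.exp 1) ^ p * (2 * M * Real.exp (p / 2)) := by
            rw [hlamV]; ring
    have hEPi_nonneg : 0 ≤ EPi (2 * n) fun σ => fA n a σ ^ p := by
      unfold EPi
      rw [← hM]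
      refine div_nonneg (Finset.sum_nonneg fun σ _ => ?_) hM0.le
      simp only [fabs σ]
      exact Real.rpow_nonneg (abs_nonneg _) p
    have hEPi_le : (EPi (2 * n) fun σ => fA n a σ ^ p)
        ≤ (W / Real.exp 1) ^ p * (2 * Real.exp (p / 2)) := by
      unfold EPi
      rw [← hM, div_le_iff₀ hM0]
      calc ∑ σ : Equiv.Perm (Fin (2 * n)), fA n a σ ^ p
          ≤ (W / Real.exp 1) ^ p * (2 * M * Real.exp (p / 2)) := hsum
        _ = (W / Real.exp 1) ^ p * (2 * Real.exp (p / 2)) * M := by ring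
    have hRle : (W / Real.exp 1) ^ p * (2 * Real.exp (p / 2)) ≤ W ^ p := by
      have h1 : (W / Real.exp 1) ^ p = W ^ p * Real.exp (-p) := by
        rw [Real.div_rpow hW0.le (Real.exp_pos 1).le, Real.exp_one_rpow, Real.exp_neg,
          div_eq_mul_inv]
      have h2 : Real.exp (-p) * (2 * Real.exp (p / 2)) = 2 * Real.exp (-(p / 2)) := by
        rw [mul_comm, mul_assoc, ← Real.exp_add]
        ring_nf
      have h3 : 2 * Real.exp (-(p / 2)) ≤ 1 := by
        have he1 : Real.exp (-(p / 2)) ≤ Real.exp (-1) := Real.exp_le_exp.2 (by linarith)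
        have he2 : Real.exp (-1) ≤ 1 / 2 := by
          rw [Real.exp_neg]
          have h4 : (2 : ℝ) ≤ Real.exp 1 := by
            have := Real.add_one_le_exp 1
            linarith
          rw [inv_le_comm₀ (Real.exp_pos 1) (by norm_num)]
          linarith
        linarith
      have hWp : (0 : ℝ) ≤ W ^ p := Real.rpow_nonneg hW0.le p
      calc (W / Real.exp 1) ^ p * (2 * Real.exp (p / 2))
          = W ^ p * (2 * Real.exp (-(p / 2))) := by rw [h1, mul_assoc, h2]
        _ ≤ W ^ p * 1 := mul_le_mul_of_nonneg_left h3 hWp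
        _ = W ^ p := mul_one _
    have final1 : (EPi (2 * n) fun σ => fA n a σ ^ p) ^ (1 / p) ≤ W := by
      calc (EPi (2 * n) fun σ => fA n a σ ^ p) ^ (1 / p)
          ≤ (W ^ p) ^ (1 / p) :=
            Real.rpow_le_rpow hEPi_nonneg (hEPi_le.trans hRle) (by positivity)
        _ = W := by
            rw [← Real.rpow_mul hW0.le, mul_one_div, div_self hp0.ne', Real.rpow_one]
    refine ⟨?_, part2⟩
    rw [← hVa]
    have hWsplit : Real.sqrt (2 * p) * Real.sqrt V = W := by
      rw [hW, Real.sqrt_mul (by positivity : (0 : ℝ) ≤ 2 * p) V]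
    rw [hWsplit]
    exact final1
end

section
/- Let n be a positive integer and 1 ≤ ℓ ≤ n. Let ξ be a hypergeometric random variable with parameters (2n, n, ℓ), i.e. ξ takes the value k ∈ {0, ..., ℓ} with probability C(ℓ,k)·C(2n−ℓ, n−k) / C(2n, n). Then for every real p ≥ 2, E |ξ − E ξ|^p ≤ √2 · (p ℓ / 4)^{p/2}. -/
/-- The probability that a hypergeometric random variable with parameters
`(N, n, ℓ)` takes the value `k`: `C(ℓ,k) C(N-ℓ, n-k) / C(N, n)`. -/
noncomputable def hgP (N n ℓ k : ℕ) : ℝ :=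
  ((ℓ.choose k : ℝ) * ((N - ℓ).choose (n - k) : ℝ)) / ((N.choose n : ℝ))

/-- The mean of a hypergeometric random variable with parameters `(N, n, ℓ)`. -/
noncomputable def hgMean (N n ℓ : ℕ) : ℝ :=
  ∑ k ∈ Finset.range (ℓ + 1), (k : ℝ) * hgP N n ℓ k

/-- The `p`-th absolute central moment `E |ξ - E ξ|^p` of a hypergeometric random
variable `ξ` with parameters `(N, n, ℓ)`. -/
noncomputable def hgCentralMoment (N n ℓ : ℕ) (p : ℝ) : ℝ :=
  ∑ k ∈ Finset.range (ℓ + 1), |(k : ℝ) - hgMean N n ℓ| ^ p * hgP N n ℓ k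

lemma cbStep (s : ℕ) : 16 * (Nat.centralBinom s)^2 * s ≤ (Nat.centralBinom (s+1))^2 * (s+1) := by
  have h := Nat.succ_mul_centralBinom_succ s
  have h2 : (s+1)^2 * (Nat.centralBinom (s+1))^2 = 4*(2*s+1)^2*(Nat.centralBinom s)^2 := by
    calc (s+1)^2 * (Nat.centralBinom (s+1))^2 = ((s+1)*(Nat.centralBinom (s+1)))^2 := by ring
      _ = (2*(2*s+1)*(Nat.centralBinom s))^2 := by rw [h]
      _ = 4*(2*s+1)^2*(Nat.centralBinom s)^2 := by ring
  have h3 : 16 * s * (s+1) ≤ 4*(2*s+1)^2 := by nlinarith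
  have key : (16 * (Nat.centralBinom s)^2 * s) * (s+1) ≤ ((Nat.centralBinom (s+1))^2 * (s+1)) * (s+1) := by
    calc (16 * (Nat.centralBinom s)^2 * s) * (s+1) = (16*s*(s+1)) * (Nat.centralBinom s)^2 := by ring
      _ ≤ (4*(2*s+1)^2) * (Nat.centralBinom s)^2 := by gcongr
      _ = (s+1)^2 * (Nat.centralBinom (s+1))^2 := by rw [h2]
      _ = ((Nat.centralBinom (s+1))^2 * (s+1)) * (s+1) := by ring
  exact Nat.le_of_mul_le_mul_right key (by omega)

lemma L1 (c : ℕ) : ∀ j, 16^j * (Nat.centralBinom c)^2 * c ≤ (Nat.centralBinom (c+j))^2 * (c+j) := by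
  intro j
  induction j with
  | zero => simp
  | succ j ih =>
    calc 16^(j+1) * (Nat.centralBinom c)^2 * c
        = 16 * (16^j * (Nat.centralBinom c)^2 * c) := by ring
      _ ≤ 16 * ((Nat.centralBinom (c+j))^2 * (c+j)) := by omega
      _ = 16 * (Nat.centralBinom (c+j))^2 * (c+j) := by ring
      _ ≤ (Nat.centralBinom (c+j+1))^2 * (c+j+1) := cbStep (c+j)

lemma twoChoose (s : ℕ) : ((2*s+1).choose s) * 2 = Nat.centralBinom (s+1) := by
  have h1 : (2*s+1).choose (s+1) = (2*s+1).choose s := by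
    have := Nat.choose_symm (n := 2*s+1) (k := s) (by omega)
    simpa [show 2*s+1-s = s+1 by omega] using this
  have h2 : Nat.centralBinom (s+1) = (2*s+2).choose (s+1) := by rfl
  rw [h2, show 2*s+2 = (2*s+1)+1 by omega, Nat.choose_succ_succ' (2*s+1) s, h1]
  omega

lemma lemC (n ℓ : ℕ) (h2 : ℓ ≤ n) :
    4^ℓ * ((2*n-ℓ).choose ((2*n-ℓ)/2))^2 ≤ 2 * ((2*n).choose n)^2 := by
  have hcb : (2*n).choose n = Nat.centralBinom n := by unfold Nat.centralBinom; rfl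
  rw [hcb]
  rcases Nat.even_or_odd ℓ with ⟨j, hj⟩ | ⟨j, hj⟩
  · subst hj
    have e1 : 2*n - (j+j) = 2*(n-j) := by omega
    have e2 : (2*(n-j))/2 = n - j := by omega
    rw [e1, e2]
    have hcb2 : (2*(n-j)).choose (n-j) = Nat.centralBinom (n-j) := by unfold Nat.centralBinom; rfl
    rw [hcb2]
    have h4 : (4:ℕ)^(j+j) = 16^j := by rw [show j + j = 2*j by omega, pow_mul]; norm_num
    rw [h4]
    have key := L1 (n-j) j
    rw [show n - j + j = n by omega] at key
    rcases Nat.eq_zero_or_pos n with hn | hn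
    · have hj0 : j = 0 := by omega
      subst hj0; subst hn; simp
    have : 16^j * (Nat.centralBinom (n-j))^2 * n ≤ 2 * (Nat.centralBinom n)^2 * n := by
      calc 16^j * (Nat.centralBinom (n-j))^2 * n
          ≤ 16^j * (Nat.centralBinom (n-j))^2 * (2*(n-j)) := by
            apply Nat.mul_le_mul_left; omega
        _ = 2 * (16^j * (Nat.centralBinom (n-j))^2 * (n-j)) := by ring
        _ ≤ 2 * ((Nat.centralBinom n)^2 * n) := by omega
        _ = 2 * (Nat.centralBinom n)^2 * n := by ring
    exact Nat.le_of_mul_le_mul_right this hn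
  · subst hj
    have hs : ∃ s, n - j - 1 = s ∧ 2*n - (2*j+1) = 2*s+1 ∧ (2*s+1)/2 = s := ⟨n-j-1, rfl, by omega, by omega⟩
    obtain ⟨s, hs1, hs2, hs3⟩ := hs
    rw [hs2, hs3]
    have h16 : (4:ℕ)^(2*j+1) = 16^j * 4 := by rw [pow_succ, pow_mul]; norm_num
    have h4 : (4:ℕ)^(2*j+1) * ((2*s+1).choose s)^2 = 16^j * (((2*s+1).choose s)*2)^2 := by
      rw [h16]; ring
    rw [h4, twoChoose s]
    have hsn : s + 1 = n - j := by omega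
    rw [hsn]
    have key := L1 (n-j) j
    rw [show n - j + j = n by omega] at key
    have hn : 0 < n := by omega
    have : 16^j * (Nat.centralBinom (n-j))^2 * n ≤ 2 * (Nat.centralBinom n)^2 * n := by
      calc 16^j * (Nat.centralBinom (n-j))^2 * n
          ≤ 16^j * (Nat.centralBinom (n-j))^2 * (2*(n-j)) := by
            apply Nat.mul_le_mul_left; omega
        _ = 2 * (16^j * (Nat.centralBinom (n-j))^2 * (n-j)) := by ring
        _ ≤ 2 * ((Nat.centralBinom n)^2 * n) := by omega
        _ = 2 * (Nat.centralBinom n)^2 * n := by ring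
    exact Nat.le_of_mul_le_mul_right this hn

lemma hgP_le (n ℓ k : ℕ) (h2 : ℓ ≤ n) (hn : 1 ≤ n) :
    hgP (2*n) n ℓ k ≤ Real.sqrt 2 * ((ℓ.choose k : ℝ) / 2^ℓ) := by
  have hD : 0 < (2*n).choose n := Nat.choose_pos (by omega)
  have hDr : (0:ℝ) < ((2*n).choose n : ℝ) := by exact_mod_cast hD
  set M := (2*n-ℓ).choose ((2*n-ℓ)/2) with hM
  have hmid : (2*n-ℓ).choose (n-k) ≤ M := Nat.choose_le_middle _ _
  have hpow : ((2:ℝ)^ℓ)^2 = 4^ℓ := by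
    rw [← pow_mul, mul_comm, pow_mul]; norm_num
  have hsq : ((2:ℝ)^ℓ * (M:ℝ))^2 ≤ 2 * ((2*n).choose n : ℝ)^2 := by
    have h := lemC n ℓ h2
    have hcast : ((4:ℝ)^ℓ * (M:ℝ)^2) ≤ 2 * ((2*n).choose n : ℝ)^2 := by exact_mod_cast h
    calc ((2:ℝ)^ℓ * (M:ℝ))^2 = ((2:ℝ)^ℓ)^2 * (M:ℝ)^2 := by ring
      _ = (4:ℝ)^ℓ * (M:ℝ)^2 := by rw [hpow]
      _ ≤ 2 * ((2*n).choose n : ℝ)^2 := hcast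
  have key : (2:ℝ)^ℓ * ((2*n-ℓ).choose (n-k) : ℝ) ≤ Real.sqrt 2 * ((2*n).choose n : ℝ) := by
    calc (2:ℝ)^ℓ * ((2*n-ℓ).choose (n-k) : ℝ) ≤ (2:ℝ)^ℓ * (M:ℝ) := by
          gcongr
      _ = Real.sqrt (((2:ℝ)^ℓ * (M:ℝ))^2) := (Real.sqrt_sq (by positivity)).symm
      _ ≤ Real.sqrt (2 * ((2*n).choose n : ℝ)^2) := Real.sqrt_le_sqrt hsq
      _ = Real.sqrt 2 * ((2*n).choose n : ℝ) := by
          rw [Real.sqrt_mul (by norm_num), Real.sqrt_sq hDr.le]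
  unfold hgP
  rw [div_le_iff₀ hDr]
  have h2l : (0:ℝ) < 2^ℓ := by positivity
  have hB : ((2*n-ℓ).choose (n-k) : ℝ) ≤ Real.sqrt 2 * ((2*n).choose n : ℝ) / 2^ℓ := by
    rw [le_div_iff₀ h2l, mul_comm]
    exact key
  calc (ℓ.choose k : ℝ) * ((2*n-ℓ).choose (n-k) : ℝ)
      ≤ (ℓ.choose k : ℝ) * (Real.sqrt 2 * ((2*n).choose n : ℝ) / 2^ℓ) := by
        apply mul_le_mul_of_nonneg_left hB (by positivity)
    _ = Real.sqrt 2 * ((ℓ.choose k : ℝ)/2^ℓ) * ((2*n).choose n : ℝ) := by ring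

lemma rpow_le_exp' (p y : ℝ) (hp : 0 < p) (hy : 0 ≤ y) :
    y ^ p ≤ (p / Real.exp 1) ^ p * Real.exp y := by
  rcases eq_or_lt_of_le hy with rfl | hy
  · rw [Real.zero_rpow (ne_of_gt hp)]
    positivity
  · have hpe : 0 < p / Real.exp 1 := div_pos hp (Real.exp_pos 1)
    rw [Real.rpow_def_of_pos hy, Real.rpow_def_of_pos hpe, ← Real.exp_add]
    apply Real.exp_le_exp.2
    rw [Real.log_div (ne_of_gt hp) (ne_of_gt (Real.exp_pos 1)), Real.log_exp]
    have hlog := Real.log_le_sub_one_of_pos (show 0 < y / p from div_pos hy hp)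
    rw [Real.log_div (ne_of_gt hy) (ne_of_gt hp)] at hlog
    have := mul_le_mul_of_nonneg_left hlog (le_of_lt hp)
    rw [mul_sub] at this
    have hyp : p * (y / p - 1) = y - p := by field_simp
    nlinarith

lemma expSum (ℓ : ℕ) (u : ℝ) :
    ∑ k ∈ Finset.range (ℓ+1), ((ℓ.choose k : ℝ)/2^ℓ) * Real.exp (u*((k:ℝ) - ℓ/2))
      = ((Real.exp (u/2) + Real.exp (-(u/2)))/2)^ℓ := by
  rw [div_pow, add_pow, Finset.sum_div]
  apply Finset.sum_congr rfl
  intro k hk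
  simp only [Finset.mem_range] at hk
  have hk' : k ≤ ℓ := by omega
  have : Real.exp (u*((k:ℝ) - ℓ/2)) = Real.exp (u/2)^k * Real.exp (-(u/2))^(ℓ-k) := by
    rw [← Real.exp_nat_mul, ← Real.exp_nat_mul, ← Real.exp_add]
    congr 1
    rw [Nat.cast_sub hk']
    ring
  rw [this]; ring

lemma binomMoment (ℓ : ℕ) (hl : 1 ≤ ℓ) (p : ℝ) (hp : 2 ≤ p) :
    ∑ k ∈ Finset.range (ℓ+1), |(k:ℝ) - (ℓ:ℝ)/2| ^ p * ((ℓ.choose k : ℝ) / 2^ℓ)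
      ≤ (p*ℓ/4) ^ (p/2) := by
  have hp0 : 0 < p := by linarith
  have hl0 : (0:ℝ) < ℓ := by exact_mod_cast hl
  set t := Real.sqrt (p/ℓ) with ht
  have ht0 : 0 < t := Real.sqrt_pos.2 (div_pos hp0 hl0)
  have ht2 : t^2 = p/ℓ := Real.sq_sqrt (le_of_lt (div_pos hp0 hl0))
  set c := (p / (Real.exp 1 * (2*t))) ^ p with hc
  have hc0 : 0 ≤ c := Real.rpow_nonneg (by positivity) p
  -- pointwise bound
  have hpt : ∀ k ∈ Finset.range (ℓ+1), |(k:ℝ) - (ℓ:ℝ)/2| ^ p * ((ℓ.choose k : ℝ)/2^ℓ)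
      ≤ c * (((ℓ.choose k : ℝ)/2^ℓ) * Real.exp ((2*t)*((k:ℝ)-(ℓ:ℝ)/2))
           + ((ℓ.choose k : ℝ)/2^ℓ) * Real.exp ((-(2*t))*((k:ℝ)-(ℓ:ℝ)/2))) := by
    intro k _
    have hw : (0:ℝ) ≤ (ℓ.choose k : ℝ)/2^ℓ := by positivity
    set x := (k:ℝ) - (ℓ:ℝ)/2 with hx
    have habs : |x|^p ≤ c * (Real.exp ((2*t)*x) + Real.exp ((-(2*t))*x)) := by
      have h1 : ((2*t)*|x|)^p ≤ (p/Real.exp 1)^p * Real.exp ((2*t)*|x|) :=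
        rpow_le_exp' p _ hp0 (by positivity)
      have h2 : Real.exp ((2*t)*|x|) ≤ Real.exp ((2*t)*x) + Real.exp ((-(2*t))*x) := by
        rcases abs_cases x with ⟨h, _⟩ | ⟨h, _⟩
        · rw [h]; exact le_add_of_nonneg_right (le_of_lt (Real.exp_pos _))
        · rw [h, show (2*t)*(-x) = (-(2*t))*x by ring]
          exact le_add_of_nonneg_left (le_of_lt (Real.exp_pos _))
      have h3 : ((2*t)*|x|)^p = (2*t)^p * |x|^p :=
        Real.mul_rpow (by positivity) (abs_nonneg x)
      have h2tp : (0:ℝ) < (2*t)^p := Real.rpow_pos_of_pos (by positivity) p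
      have hcc : c = (p/Real.exp 1)^p / (2*t)^p := by
        rw [hc, show p/(Real.exp 1*(2*t)) = (p/Real.exp 1)/(2*t) by ring,
          Real.div_rpow (by positivity) (by positivity)]
      calc |x|^p = ((2*t)^p * |x|^p)/(2*t)^p := by field_simp
        _ = ((2*t)*|x|)^p / (2*t)^p := by rw [h3]
        _ ≤ ((p/Real.exp 1)^p * Real.exp ((2*t)*|x|))/(2*t)^p := by gcongr
        _ ≤ ((p/Real.exp 1)^p * (Real.exp ((2*t)*x) + Real.exp ((-(2*t))*x)))/(2*t)^p := by
            gcongr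
        _ = c * (Real.exp ((2*t)*x) + Real.exp ((-(2*t))*x)) := by rw [hcc]; ring
    calc |x|^p * ((ℓ.choose k : ℝ)/2^ℓ)
        ≤ (c * (Real.exp ((2*t)*x) + Real.exp ((-(2*t))*x))) * ((ℓ.choose k : ℝ)/2^ℓ) :=
          mul_le_mul_of_nonneg_right habs hw
      _ = c * (((ℓ.choose k : ℝ)/2^ℓ) * Real.exp ((2*t)*x)
           + ((ℓ.choose k : ℝ)/2^ℓ) * Real.exp ((-(2*t))*x)) := by ring
  have hsum1 := expSum ℓ (2*t)
  have hsum2 := expSum ℓ (-(2*t))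
  rw [show (2*t)/2 = t by ring] at hsum1
  rw [show (-(2*t))/2 = -t by ring, neg_neg] at hsum2
  have hcosh : (Real.exp t + Real.exp (-t))/2 = Real.cosh t := (Real.cosh_eq t).symm
  have hcoshle : Real.cosh t ≤ Real.exp (p/ℓ/2) := by
    have := Real.cosh_le_exp_half_sq t
    rwa [ht2] at this
  have hpowle : ((Real.exp t + Real.exp (-t))/2)^ℓ ≤ Real.exp (p/2) := by
    rw [hcosh]
    calc Real.cosh t ^ ℓ ≤ Real.exp (p/ℓ/2) ^ ℓ :=
          pow_le_pow_left₀ (Real.cosh_pos (x := t)).le hcoshle ℓ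
      _ = Real.exp (ℓ * (p/ℓ/2)) := by rw [← Real.exp_nat_mul]
      _ = Real.exp (p/2) := by congr 1; field_simp
  have hpowle2 : ((Real.exp (-t) + Real.exp t)/2)^ℓ ≤ Real.exp (p/2) := by
    rw [add_comm]; exact hpowle
  calc ∑ k ∈ Finset.range (ℓ+1), |(k:ℝ) - (ℓ:ℝ)/2| ^ p * ((ℓ.choose k : ℝ) / 2^ℓ)
      ≤ ∑ k ∈ Finset.range (ℓ+1), c * (((ℓ.choose k : ℝ)/2^ℓ) * Real.exp ((2*t)*((k:ℝ)-(ℓ:ℝ)/2))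
           + ((ℓ.choose k : ℝ)/2^ℓ) * Real.exp ((-(2*t))*((k:ℝ)-(ℓ:ℝ)/2))) :=
        Finset.sum_le_sum hpt
    _ = c * (((Real.exp t + Real.exp (-t))/2)^ℓ + ((Real.exp (-t) + Real.exp t)/2)^ℓ) := by
        rw [← Finset.mul_sum, Finset.sum_add_distrib, hsum1, hsum2]
    _ ≤ c * (Real.exp (p/2) + Real.exp (p/2)) := by
        apply mul_le_mul_of_nonneg_left _ hc0
        exact add_le_add hpowle hpowle2
    _ = 2 * c * Real.exp (p/2) := by ring
    _ ≤ (p*ℓ/4) ^ (p/2) := by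
        have hA : (0:ℝ) ≤ p*ℓ/4 := by positivity
        have hq : p/(2*t) = Real.sqrt (p*ℓ/4) := by
          rw [show p*(ℓ:ℝ)/4 = (p/(2*t))^2 by
            rw [div_pow, mul_pow, ht2]; field_simp; ring]
          rw [Real.sqrt_sq (by positivity)]
        have hcval : c = (p*ℓ/4)^(p/2) / Real.exp p := by
          rw [hc, show p/(Real.exp 1*(2*t)) = (p/(2*t))/(Real.exp 1) by ring,
            Real.div_rpow (by positivity) (le_of_lt (Real.exp_pos 1)),
            Real.exp_one_rpow, hq, Real.sqrt_eq_rpow, ← Real.rpow_mul hA,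
            show 1/2*p = p/2 by ring]
        rw [hcval]
        have hexp : 2 * Real.exp (p/2) ≤ Real.exp p := by
          have h1 : (2:ℝ) ≤ Real.exp (p/2) := by
            calc (2:ℝ) ≤ Real.exp 1 := by
                  have := Real.add_one_le_exp 1
                  linarith
              _ ≤ Real.exp (p/2) := Real.exp_le_exp.2 (by linarith)
          calc 2 * Real.exp (p/2) ≤ Real.exp (p/2) * Real.exp (p/2) :=
                mul_le_mul_of_nonneg_right h1 (le_of_lt (Real.exp_pos _))
            _ = Real.exp p := by rw [← Real.exp_add]; congr 1; ring
        calc 2 * ((p*ℓ/4)^(p/2) / Real.exp p) * Real.exp (p/2)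
            = (p*ℓ/4)^(p/2) * ((2*Real.exp (p/2))/Real.exp p) := by ring
          _ ≤ (p*ℓ/4)^(p/2) * 1 := by
              apply mul_le_mul_of_nonneg_left _ (Real.rpow_nonneg hA _)
              rw [div_le_one (Real.exp_pos p)]
              exact hexp
          _ = (p*ℓ/4)^(p/2) := by ring

lemma lemV (n ℓ : ℕ) (h1 : 1 ≤ ℓ) (h2 : ℓ ≤ n) :
    ∑ k ∈ Finset.range (ℓ+1), k * (ℓ.choose k) * ((2*n-ℓ).choose (n-k))
      = ℓ * ((2*n-1).choose (n-1)) := by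
  obtain ⟨m, rfl⟩ : ∃ m, ℓ = m + 1 := ⟨ℓ-1, by omega⟩
  rw [Finset.sum_range_succ']
  simp only [Nat.zero_mul, Nat.mul_zero, zero_mul, add_zero]
  have step : ∀ k, (k+1) * ((m+1).choose (k+1)) * ((2*n-(m+1)).choose (n-(k+1)))
      = (m+1) * ((m.choose k) * ((2*n-(m+1)).choose ((n-1)-k))) := by
    intro k
    have e1 : n - (k+1) = (n-1) - k := by omega
    have e2 := Nat.add_one_mul_choose_eq m k
    rw [e1]
    calc (k+1) * ((m+1).choose (k+1)) * ((2*n-(m+1)).choose ((n-1)-k))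
        = ((m+1).choose (k+1) * (k+1)) * ((2*n-(m+1)).choose ((n-1)-k)) := by ring
      _ = ((m+1) * m.choose k) * ((2*n-(m+1)).choose ((n-1)-k)) := by rw [← e2]
      _ = (m+1) * ((m.choose k) * ((2*n-(m+1)).choose ((n-1)-k))) := by ring
  rw [Finset.sum_congr rfl (fun k _ => step k), ← Finset.mul_sum]
  congr 1
  have ext : ∑ k ∈ Finset.range (m+1), (m.choose k) * ((2*n-(m+1)).choose ((n-1)-k))
      = ∑ k ∈ Finset.range ((n-1)+1), (m.choose k) * ((2*n-(m+1)).choose ((n-1)-k)) := by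
    apply Finset.sum_subset
    · intro x hx; simp only [Finset.mem_range] at *; omega
    · intro x _ hx
      simp only [Finset.mem_range, not_lt] at hx
      rw [Nat.choose_eq_zero_of_lt (by omega), zero_mul]
  rw [ext]
  have vdm := Nat.add_choose_eq m (2*n-(m+1)) (n-1)
  rw [show m + (2*n-(m+1)) = 2*n-1 by omega] at vdm
  rw [vdm, Finset.Nat.sum_antidiagonal_eq_sum_range_succ
    (fun i j => m.choose i * (2*n-(m+1)).choose j)]

lemma hgMean_eq (n ℓ : ℕ) (h1 : 1 ≤ ℓ) (h2 : ℓ ≤ n) :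
    hgMean (2*n) n ℓ = (ℓ:ℝ)/2 := by
  have hE : 0 < (2*n-1).choose (n-1) := Nat.choose_pos (by omega)
  have hDD : (2*n).choose n = 2 * ((2*n-1).choose (n-1)) := by
    have h := twoChoose (n-1)
    rw [show 2*(n-1)+1 = 2*n-1 by omega, show (n-1)+1 = n by omega] at h
    have : Nat.centralBinom n = (2*n).choose n := rfl
    omega
  unfold hgMean hgP
  have : ∀ k ∈ Finset.range (ℓ+1), (k:ℝ) * (((ℓ.choose k : ℝ) * (((2*n)-ℓ).choose (n-k) : ℝ)) / (((2*n).choose n : ℝ)))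
      = ((k * (ℓ.choose k) * (((2*n)-ℓ).choose (n-k)) : ℕ) : ℝ) / (((2*n).choose n : ℝ)) := by
    intro k _
    push_cast
    ring
  rw [Finset.sum_congr rfl this, ← Finset.sum_div, ← Nat.cast_sum, lemV n ℓ h1 h2, hDD]
  have hEpos : (0:ℝ) < ((2*n-1).choose (n-1) : ℝ) := by exact_mod_cast hE
  push_cast
  field_simp

theorem stmt5 (n ℓ : ℕ) (h1 : 1 ≤ ℓ) (h2 : ℓ ≤ n) (p : ℝ) (hp : 2 ≤ p) :
    hgCentralMoment (2 * n) n ℓ p ≤ Real.sqrt 2 * (p * ℓ / 4) ^ (p / 2) := by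
  have hn : 1 ≤ n := le_trans h1 h2
  have hmean := hgMean_eq n ℓ h1 h2
  unfold hgCentralMoment
  rw [hmean]
  calc ∑ k ∈ Finset.range (ℓ+1), |(k:ℝ) - (ℓ:ℝ)/2| ^ p * hgP (2*n) n ℓ k
      ≤ ∑ k ∈ Finset.range (ℓ+1),
          Real.sqrt 2 * (|(k:ℝ) - (ℓ:ℝ)/2| ^ p * ((ℓ.choose k : ℝ)/2^ℓ)) := by
        apply Finset.sum_le_sum
        intro k _
        have hb := hgP_le n ℓ k h2 hn
        calc |(k:ℝ) - (ℓ:ℝ)/2| ^ p * hgP (2*n) n ℓ k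
            ≤ |(k:ℝ) - (ℓ:ℝ)/2| ^ p * (Real.sqrt 2 * ((ℓ.choose k : ℝ)/2^ℓ)) :=
              mul_le_mul_of_nonneg_left hb (Real.rpow_nonneg (abs_nonneg _) p)
          _ = Real.sqrt 2 * (|(k:ℝ) - (ℓ:ℝ)/2| ^ p * ((ℓ.choose k : ℝ)/2^ℓ)) := by ring
    _ = Real.sqrt 2 * ∑ k ∈ Finset.range (ℓ+1),
          |(k:ℝ) - (ℓ:ℝ)/2| ^ p * ((ℓ.choose k : ℝ)/2^ℓ) := by
        rw [Finset.mul_sum]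
    _ ≤ Real.sqrt 2 * (p * ℓ / 4) ^ (p / 2) := by
        apply mul_le_mul_of_nonneg_left _ (Real.sqrt_nonneg 2)
        have := binomMoment ℓ h1 p hp
        calc ∑ k ∈ Finset.range (ℓ+1), |(k:ℝ) - (ℓ:ℝ)/2| ^ p * ((ℓ.choose k : ℝ)/2^ℓ)
            = ∑ k ∈ Finset.range (ℓ+1), |(k:ℝ) - (ℓ:ℝ)/2| ^ p * ((ℓ.choose k : ℝ) / 2^ℓ) := rfl
          _ ≤ (p*(ℓ:ℝ)/4) ^ (p/2) := this
end

section
/- The sequence n ↦ √(πn) · C(2n, n) / 4^n is monotone increasing in the positive integer n. -/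
lemma sqrt_form (a x : ℝ) (ha : 0 ≤ a) (hx : 0 ≤ x) :
    Real.sqrt a * x = Real.sqrt (a * x ^ 2) := by
  rw [Real.sqrt_mul ha (x ^ 2), Real.sqrt_sq hx]

lemma step10 (k : ℕ) (hk : 0 < k) :
    Real.sqrt (Real.pi * k) * ((2 * k).choose k : ℝ) / 4 ^ k ≤
      Real.sqrt (Real.pi * (k + 1)) * ((2 * (k + 1)).choose (k + 1) : ℝ) / 4 ^ (k + 1) := by
  set c : ℝ := ((2 * k).choose k : ℝ) with hc
  set c' : ℝ := ((2 * (k + 1)).choose (k + 1) : ℝ) with hc'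
  have hrec : ((k : ℝ) + 1) * c' = 2 * (2 * k + 1) * c := by
    have := Nat.succ_mul_centralBinom_succ k
    have : ((k + 1) * Nat.centralBinom (k + 1) : ℝ) = (2 * (2 * k + 1) * Nat.centralBinom k : ℝ) := by
      exact_mod_cast congrArg (Nat.cast : ℕ → ℝ) this
    simpa [Nat.centralBinom, hc, hc', mul_comm, mul_assoc, mul_left_comm, Nat.mul_succ] using this
  have hcpos : 0 < c := by
    have := Nat.centralBinom_pos k
    simp only [hc, Nat.centralBinom] at *
    exact_mod_cast this
  have h1 : (0:ℝ) ≤ c / 4 ^ k := by positivity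
  have h2 : (0:ℝ) ≤ c' / 4 ^ (k + 1) := by positivity
  rw [mul_div_assoc, mul_div_assoc,
    sqrt_form _ _ (by positivity) h1, sqrt_form _ _ (by positivity) h2]
  apply Real.sqrt_le_sqrt
  push_cast
  rw [div_pow, div_pow, ← mul_div_assoc, ← mul_div_assoc,
      div_le_div_iff₀ (by positivity) (by positivity)]
  have hk' : (1:ℝ) ≤ (k:ℝ) := by exact_mod_cast hk
  have hkey : 16 * (k:ℝ) * ((k:ℝ) + 1) * c ^ 2 ≤ ((k:ℝ) + 1) ^ 2 * c' ^ 2 := by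
    have hsq : (((k:ℝ) + 1) * c') ^ 2 = (2 * (2 * (k:ℝ) + 1) * c) ^ 2 := by rw [hrec]
    nlinarith [hsq, sq_nonneg c, hk']
  have hpow : ((4:ℝ) ^ (k + 1)) ^ 2 = 16 * ((4:ℝ) ^ k) ^ 2 := by
    rw [pow_succ]; ring
  rw [hpow]
  have hkp1 : (0:ℝ) < (k:ℝ) + 1 := by positivity
  have h4 : (0:ℝ) < ((4:ℝ) ^ k) ^ 2 := by positivity
  nlinarith [mul_le_mul_of_nonneg_right hkey (le_of_lt h4), Real.pi_pos]

theorem stmt10 (n m : ℕ) (hn : 0 < n) (hnm : n ≤ m) :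
    Real.sqrt (Real.pi * n) * ((2 * n).choose n : ℝ) / 4 ^ n ≤
      Real.sqrt (Real.pi * m) * ((2 * m).choose m : ℝ) / 4 ^ m := by
  induction m, hnm using Nat.le_induction with
  | base => exact le_rfl
  | succ k hk ih => exact le_trans ih (by exact_mod_cast step10 k (lt_of_lt_of_le hn hk))
end

section
/- Let n be a positive integer and let ℓ, k be integers with 1 ≤ ℓ ≤ n and 0 ≤ k ≤ ℓ. Then C(2n − ℓ, n − k) / C(2n, n) ≤ 2 / 2^ℓ ≤ 1. In particular, C(2n − ℓ, n − k) ≤ C(2n − ℓ, n − ⌊ℓ/2⌋) and C(2n − ℓ, n − ⌊ℓ/2⌋) / C(2n, n) ≤ 2^{1−ℓ}. -/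
/-- Normalized central binomial coefficient `C(2t,t)/4^t`. -/
noncomputable def ccAux (t : ℕ) : ℝ := (Nat.centralBinom t : ℝ) / 4 ^ t

lemma ccAux_pos (t : ℕ) : 0 < ccAux t := by
  have : (0 : ℝ) < (Nat.centralBinom t : ℝ) := by exact_mod_cast t.centralBinom_pos
  exact div_pos this (by positivity)

lemma ccAux_rec (t : ℕ) :
    ccAux (t + 1) * (2 * (t : ℝ) + 2) = ccAux t * (2 * (t : ℝ) + 1) := by
  have h := Nat.succ_mul_centralBinom_succ t
  have h' : ((t : ℝ) + 1) * (Nat.centralBinom (t + 1) : ℝ)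
      = 2 * (2 * (t : ℝ) + 1) * (Nat.centralBinom t : ℝ) := by exact_mod_cast h
  have h4 : (4 : ℝ) ^ (t + 1) = 4 ^ t * 4 := by ring
  unfold ccAux
  rw [h4]
  have h4p : (0:ℝ) < 4 ^ t := by positivity
  field_simp
  nlinarith [h']

lemma V_step (t : ℕ) :
    (2 * (t : ℝ)) * (ccAux t) ^ 2 ≤ (2 * ((t : ℝ) + 1)) * (ccAux (t + 1)) ^ 2 := by
  have h := ccAux_rec t
  have h1 := ccAux_pos t
  have h2 := ccAux_pos (t + 1)
  have ht : (0 : ℝ) ≤ (t : ℝ) := Nat.cast_nonneg t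
  have hsq : (ccAux (t + 1) * (2 * (t : ℝ) + 2)) ^ 2
      = (ccAux t * (2 * (t : ℝ) + 1)) ^ 2 := by rw [h]
  nlinarith [hsq, sq_nonneg (ccAux t), sq_nonneg (ccAux (t + 1)), ht,
    mul_nonneg ht (sq_nonneg (ccAux (t + 1))), mul_nonneg ht (sq_nonneg (ccAux t))]

lemma V_mono {a b : ℕ} (hab : a ≤ b) :
    (2 * (a : ℝ)) * (ccAux a) ^ 2 ≤ (2 * (b : ℝ)) * (ccAux b) ^ 2 := by
  induction b with
  | zero =>
    have : a = 0 := Nat.le_zero.mp hab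
    subst this; exact le_rfl
  | succ b ih =>
    rcases Nat.lt_or_ge a (b + 1) with h | h
    · calc (2 * (a : ℝ)) * (ccAux a) ^ 2
          ≤ (2 * (b : ℝ)) * (ccAux b) ^ 2 := ih (Nat.lt_succ_iff.mp h)
        _ ≤ (2 * ((b : ℝ) + 1)) * (ccAux (b + 1)) ^ 2 := V_step b
        _ = (2 * (((b + 1 : ℕ)) : ℝ)) * (ccAux (b + 1)) ^ 2 := by push_cast; ring
    · have : a = b + 1 := le_antisymm hab h
      subst this
      push_cast
      exact le_rfl

/-- If `1 ≤ a ≤ b ≤ 4a` then `ccAux a ≤ 2 * ccAux b`. -/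
lemma ccAux_le (a b : ℕ) (ha : 1 ≤ a) (hab : a ≤ b) (hb : b ≤ 4 * a) :
    ccAux a ≤ 2 * ccAux b := by
  have hV := V_mono hab
  have h1 := ccAux_pos a
  have h2 := ccAux_pos b
  have ha' : (1 : ℝ) ≤ (a : ℝ) := by exact_mod_cast ha
  have hb' : (b : ℝ) ≤ 4 * (a : ℝ) := by exact_mod_cast hb
  have hA2 : (ccAux a) ^ 2 ≤ 4 * (ccAux b) ^ 2 := by
    have h8 : 2 * (a : ℝ) * (ccAux a) ^ 2 ≤ 2 * (a : ℝ) * (4 * (ccAux b) ^ 2) := by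
      nlinarith [sq_nonneg (ccAux b)]
    exact le_of_mul_le_mul_left h8 (by linarith)
  nlinarith [hA2, mul_pos h1 h2, h1, h2]

/-- Normalized middle binomial coefficient `C(m, ⌊m/2⌋)/2^m`. -/
noncomputable def dd (m : ℕ) : ℝ := (m.choose (m / 2) : ℝ) / 2 ^ m

lemma dd_even (t : ℕ) : dd (2 * t) = ccAux t := by
  unfold dd ccAux
  rw [Nat.centralBinom]
  congr 1
  · norm_num
  · rw [pow_mul]; norm_num

lemma two_mul_choose_middle (t : ℕ) :
    2 * (2 * t + 1).choose t = Nat.centralBinom (t + 1) := by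
  rw [Nat.centralBinom]
  have h : 2 * (t + 1) = (2 * t + 1) + 1 := by ring
  rw [h, Nat.choose_succ_succ, Nat.choose_symm_half, two_mul]

lemma dd_odd (t : ℕ) : dd (2 * t + 1) = ccAux (t + 1) := by
  unfold dd ccAux
  have hhalf : (2 * t + 1) / 2 = t := by omega
  rw [hhalf, ← two_mul_choose_middle t]
  have : ((2 * (2 * t + 1).choose t : ℕ) : ℝ) = 2 * ((2 * t + 1).choose t : ℝ) := by
    push_cast; ring
  rw [this]
  have h2 : (2 : ℝ) ^ (2 * t + 1) = 2 ^ (2 * t) * 2 := by ring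
  have h4 : (4 : ℝ) ^ (t + 1) = 2 ^ (2 * t) * 4 := by
    rw [show (4:ℝ) = 2^2 by norm_num, ← pow_mul]; ring
  rw [h2, h4]
  have hp : (0:ℝ) < 2 ^ (2 * t) := by positivity
  field_simp
  ring

lemma choose_succ_le_two_middle (m k : ℕ) :
    (m + 1).choose k ≤ 2 * m.choose (m / 2) := by
  cases k with
  | zero =>
    have hp : 0 < m.choose (m / 2) := Nat.choose_pos (Nat.div_le_self m 2)
    simp only [Nat.choose_zero_right]
    omega
  | succ j =>
    rw [Nat.choose_succ_succ, two_mul]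
    exact Nat.add_le_add (Nat.choose_le_middle j m) (Nat.choose_le_middle (j + 1) m)

lemma dd_anti_step (m : ℕ) : dd (m + 1) ≤ dd m := by
  unfold dd
  have h := choose_succ_le_two_middle m ((m + 1) / 2)
  have h' : ((m + 1).choose ((m + 1) / 2) : ℝ) ≤ 2 * (m.choose (m / 2) : ℝ) := by
    exact_mod_cast h
  have h2 : (2 : ℝ) ^ (m + 1) = 2 ^ m * 2 := by ring
  rw [h2]
  rw [div_le_div_iff₀ (by positivity) (by positivity)]
  nlinarith [pow_pos (show (0:ℝ) < 2 by norm_num) m]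

lemma dd_anti {a b : ℕ} (hab : a ≤ b) : dd b ≤ dd a := by
  induction b with
  | zero => have : a = 0 := Nat.le_zero.mp hab; subst this; exact le_rfl
  | succ b ih =>
    rcases Nat.lt_or_ge a (b + 1) with h | h
    · exact (dd_anti_step b).trans (ih (Nat.lt_succ_iff.mp h))
    · have : a = b + 1 := le_antisymm hab h
      subst this; exact le_rfl

/-- Key inequality: for `1 ≤ n ≤ m`, `C(m,⌊m/2⌋)/2^m ≤ 2 C(2n,n)/2^(2n)`. -/
lemma dd_key {n m : ℕ} (hn : 1 ≤ n) (hnm : n ≤ m) : dd m ≤ 2 * dd (2 * n) := by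
  have h1 : dd m ≤ dd n := dd_anti hnm
  refine h1.trans ?_
  rw [dd_even]
  rcases Nat.even_or_odd n with ⟨t, ht⟩ | ⟨t, ht⟩
  · subst ht
    rw [show t + t = 2 * t by ring, dd_even]
    exact ccAux_le t (2 * t) (by omega) (by omega) (by omega)
  · subst ht
    rw [dd_odd]
    exact ccAux_le (t + 1) (2 * t + 1) (by omega) (by omega) (by omega)

theorem stmt11 (n ℓ k : ℕ) (h1 : 1 ≤ ℓ) (h2 : ℓ ≤ n) (hk : k ≤ ℓ) :
    (((2 * n - ℓ).choose (n - k) : ℝ) / (((2 * n).choose n : ℝ)) ≤ 2 / 2 ^ ℓ ∧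
        (2 : ℝ) / 2 ^ ℓ ≤ 1) ∧
      (2 * n - ℓ).choose (n - k) ≤ (2 * n - ℓ).choose (n - ℓ / 2) ∧
        ((2 * n - ℓ).choose (n - ℓ / 2) : ℝ) / (((2 * n).choose n : ℝ)) ≤
          (2 : ℝ) ^ (1 - (ℓ : ℤ)) := by
  set m := 2 * n - ℓ with hm
  have hmn : n ≤ m := by omega
  have hn1 : 1 ≤ n := le_trans h1 h2
  have hml : m + ℓ = 2 * n := by omega
  -- n - ℓ/2 is the middle of row m
  have hmid : m.choose (n - ℓ / 2) = m.choose (m / 2) := by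
    rcases Nat.even_or_odd ℓ with ⟨s, hs⟩ | ⟨s, hs⟩
    · have : n - ℓ / 2 = m / 2 := by omega
      rw [this]
    · -- ℓ = 2s+1, m = 2(n-s-1)+1, n - ℓ/2 = n - s = (n-s-1)+1
      have hs1 : s + 1 ≤ n := by omega
      have hm' : m = 2 * (n - s - 1) + 1 := by omega
      have h1' : n - ℓ / 2 = (n - s - 1) + 1 := by omega
      have h2' : m / 2 = n - s - 1 := by omega
      rw [h1', h2', hm']
      exact Nat.choose_symm_half (n - s - 1)
  -- positivity facts
  have hC2n : (0 : ℝ) < ((2 * n).choose n : ℝ) := by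
    exact_mod_cast Nat.choose_pos (by omega)
  have hpow : (0 : ℝ) < (2 : ℝ) ^ ℓ := by positivity
  -- the main ratio bound for the middle coefficient
  have hkey : ((m.choose (m / 2) : ℝ)) / ((2 * n).choose n : ℝ) ≤ 2 / 2 ^ ℓ := by
    have h := dd_key hn1 hmn
    unfold dd at h
    rw [Nat.mul_div_cancel_left n (by norm_num : 0 < 2)] at h
    have hps : (2 : ℝ) ^ (2 * n) = 2 ^ m * 2 ^ ℓ := by
      rw [← pow_add, hml]
    have hm0 : (0 : ℝ) < (2:ℝ) ^ m := by positivity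
    rw [div_le_iff₀ hm0] at h
    rw [div_le_div_iff₀ hC2n hpow]
    calc (m.choose (m / 2) : ℝ) * 2 ^ ℓ
        ≤ 2 * (((2 * n).choose n : ℝ) / 2 ^ (2 * n)) * 2 ^ m * 2 ^ ℓ := by
          nlinarith [h, hpow]
      _ = 2 * ((2 * n).choose n : ℝ) := by
          rw [hps]; field_simp
  have hle_mid : (m.choose (n - k) : ℝ) ≤ (m.choose (m / 2) : ℝ) := by
    exact_mod_cast Nat.choose_le_middle (n - k) m
  refine ⟨⟨?_, ?_⟩, ?_, ?_⟩
  · refine le_trans ?_ hkey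
    exact (div_le_div_iff_of_pos_right hC2n).mpr hle_mid
  · rw [div_le_one hpow]
    calc (2:ℝ) = 2 ^ 1 := (pow_one 2).symm
      _ ≤ 2 ^ ℓ := pow_le_pow_right₀ (by norm_num) h1
  · rw [hmid]; exact Nat.choose_le_middle (n - k) m
  · rw [hmid]
    have : (2 : ℝ) ^ (1 - (ℓ : ℤ)) = 2 / 2 ^ ℓ := by
      rw [zpow_sub₀ (by norm_num : (2:ℝ) ≠ 0), zpow_one, zpow_natCast]
    rw [this]
    exact hkey
end
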